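/- arXiv:1406.4022 — 5 statements merged into one kernel-verified Lean document; each statement's English description precedes it below -/
import Mathlib

section
/- For any integer t ≥ 1 and any prime p > t, the multiple q-harmonic sum H_{p-1}^q({2}^t) = ∑_{1≤k_1<⋯<k_t≤p-1} q^{k_1+⋯+k_t}/([k_1]_q^2 ⋯ [k_t]_q^2) satisfies H_{p-1}^q({2}^t) ≡ (-1)^t · binom(p+t, 2t+1) · (1-q)^{2t} / (p(t+1)) modulo [p]_q. -/
open scoped Classical

/-- The `q`-integer `[k]_q = (1-q^k)/(1-q)`. -/
noncomputable def qint (q : ℂ) (k : ℕ) : ℂ := (1 - q ^ k) / (1 - q)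

/-- The homogeneous multiple `q`-harmonic sum
`H_n^q({2}^t) = ∑_{1≤k_1<⋯<k_t≤n} q^{k_1+⋯+k_t}/([k_1]_q^2⋯[k_t]_q^2)`. -/
noncomputable def qH2t (q : ℂ) (n t : ℕ) : ℂ :=
  ∑ k ∈ (Fintype.piFinset fun _ : Fin t => Finset.Icc 1 n).filter
      (fun k => StrictMono k),
    ∏ i : Fin t, q ^ (k i) / (qint q (k i)) ^ 2

section QHAux

open Finset Polynomial


/-- `Dc n j = n * C(n+j-1, 2j-1) / j` as a complex number. -/
noncomputable def Dc (n j : ℕ) : ℂ := n * ((n + j - 1).choose (2 * j - 1)) / j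

lemma Dc_zero_right (n : ℕ) : Dc n 0 = 0 := by simp [Dc]

lemma Dc_zero_left (j : ℕ) : Dc 0 j = 0 := by simp [Dc]

lemma Dc_eq (n i : ℕ) :
    Dc n (i + 1) = n * ((n + i).choose (2 * i + 1)) / (i + 1) := by
  have h1 : n + (i + 1) - 1 = n + i := by omega
  have h2 : 2 * (i + 1) - 1 = 2 * i + 1 := by omega
  rw [Dc, h1, h2]
  push_cast
  ring

/-- Key recurrence for the coefficients. -/
lemma Dc_rec (n j : ℕ) (hj : 1 ≤ j) :
    Dc (n + 2) j + Dc n j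
      = 2 * Dc (n + 1) j + Dc (n + 1) (j - 1) + (if j = 1 then 2 else 0) := by
  obtain ⟨i, rfl⟩ : ∃ i, j = i + 1 := ⟨j - 1, by omega⟩
  rcases Nat.eq_zero_or_pos i with rfl | hi
  · have h0 : (0:ℕ) + 1 - 1 = 0 := rfl
    rw [h0, Dc_zero_right, if_pos rfl]
    simp only [Dc_eq]
    norm_num [Nat.choose_one_right]
    push_cast
    ring
  · obtain ⟨i', rfl⟩ : ∃ i', i = i' + 1 := ⟨i - 1, by omega⟩
    rw [if_neg (by omega : ¬ i' + 1 + 1 = 1)]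
    have hred : i' + 1 + 1 - 1 = i' + 1 := by omega
    rw [hred]
    simp only [Dc_eq]
    simp only [show n + 2 + (i' + 1) = n + i' + 1 + 1 + 1 from by ring,
      show 2 * (i' + 1) + 1 = 2 * i' + 1 + 1 + 1 from by ring,
      show n + (i' + 1) = n + i' + 1 from by ring,
      show n + 1 + (i' + 1) = n + i' + 1 + 1 from by ring,
      show n + 1 + i' = n + i' + 1 from by ring]
    have pas : ∀ a b : ℕ, (a+1).choose (b+1) = a.choose b + a.choose (b+1) :=
      fun a b => Nat.choose_succ_succ' a b
    set C1 : ℕ := (n + i' + 1 + 1 + 1).choose (2 * i' + 1 + 1 + 1) with hC1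
    set C2 : ℕ := (n + i' + 1).choose (2 * i' + 1 + 1 + 1) with hC2
    set C3 : ℕ := (n + i' + 1 + 1).choose (2 * i' + 1 + 1 + 1) with hC3
    set C4 : ℕ := (n + i' + 1).choose (2 * i' + 1) with hC4
    set E : ℕ := (n + i' + 1).choose (2 * i' + 1 + 1) with hE
    set M : ℕ := (n + i' + 1 + 1).choose (2 * i' + 1 + 1) with hM
    have p1 : C1 = M + C3 := pas (n + i' + 1 + 1) (2 * i' + 1 + 1)
    have pM : M = C4 + E := pas (n + i' + 1) (2 * i' + 1)
    have p2 : C3 = E + C2 := pas (n + i' + 1) (2 * i' + 1 + 1)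
    have p3 : E * (2 * i' + 1 + 1) = C4 * (n + i' + 1 - (2 * i' + 1)) :=
      Nat.choose_succ_right_eq (n + i' + 1) (2 * i' + 1)
    have h2 : ((i':ℂ) + 1) ≠ 0 := by exact_mod_cast Nat.succ_ne_zero i'
    have h1 : ((i':ℂ) + 1 + 1) ≠ 0 := by exact_mod_cast Nat.succ_ne_zero (i' + 1)
    rcases le_or_gt i' n with hin | hin
    · have hsub : n + i' + 1 - (2 * i' + 1) = n - i' := by omega
      rw [hsub] at p3
      have p3' : (E : ℂ) * (2 * (i':ℂ) + 2) = (C4 : ℂ) * ((n : ℂ) - (i' : ℂ)) := by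
        have h := congrArg (Nat.cast (R := ℂ)) p3
        push_cast at h
        rw [Nat.cast_sub hin] at h
        push_cast at h
        linear_combination h
      have p1' : (C1 : ℂ) = (M : ℂ) + (C3 : ℂ) := by exact_mod_cast p1
      have pM' : (M : ℂ) = (C4 : ℂ) + (E : ℂ) := by exact_mod_cast pM
      have p2' : (C3 : ℂ) = (E : ℂ) + (C2 : ℂ) := by exact_mod_cast p2
      have main : (((n:ℂ)+2) * C1 + (n:ℂ) * C2) * ((i':ℂ)+1)
          = (2*((n:ℂ)+1)*C3) * ((i':ℂ)+1) + ((n:ℂ)+1)*(C4:ℂ)*((i':ℂ)+1+1) := by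
        linear_combination (((n:ℂ)+2)*((i':ℂ)+1)) * p1' + (((n:ℂ)+2)*((i':ℂ)+1)) * pM'
          - ((n:ℂ)*((i':ℂ)+1)) * p2' + p3'
      push_cast
      field_simp
      linear_combination main
    · have z4 : C4 = 0 := Nat.choose_eq_zero_of_lt (by omega)
      have zE : E = 0 := Nat.choose_eq_zero_of_lt (by omega)
      have z2 : C2 = 0 := Nat.choose_eq_zero_of_lt (by omega)
      have z3 : C3 = 0 := by rw [p2, zE, z2]
      have z1 : C1 = 0 := by rw [p1, pM, z4, zE, z3]
      rw [z1, z2, z3, z4]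
      simp

/-- The polynomial family `A n` with `A n = 2 - w^n - w^{-n}` under `x = 2 - w - w⁻¹`. -/
noncomputable def Ap : ℕ → Polynomial ℂ
  | 0 => 0
  | 1 => Polynomial.X
  | (n+2) => 2 * Polynomial.X + (2 - Polynomial.X) * Ap (n+1) - Ap n

lemma Ap_eval (w : ℂ) (hw : w ≠ 0) : ∀ n : ℕ,
    (Ap n).eval (2 - w - w⁻¹) = 2 - w ^ n - (w⁻¹) ^ n
  | 0 => by simp [Ap]; norm_num
  | 1 => by simp [Ap]
  | (n+2) => by
    rw [Ap]
    simp only [eval_sub, eval_mul, eval_add, eval_ofNat, eval_X,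
      Ap_eval w hw (n+1), Ap_eval w hw n]
    have huv : w * w⁻¹ = 1 := mul_inv_cancel₀ hw
    linear_combination (-(w^n) - (w⁻¹)^n) * huv

lemma Ap_coeff : ∀ n j : ℕ, (Ap n).coeff j = (-1) ^ (j + 1) * Dc n j
  | 0, j => by simp [Ap, Dc_zero_left]
  | 1, j => by
    rw [Ap, coeff_X]
    rcases eq_or_ne j 1 with rfl | hj
    · rw [if_pos rfl]
      simp [Dc_eq 1 0]
    · rw [if_neg (Ne.symm hj)]
      rcases Nat.eq_zero_or_pos j with rfl | hj0
      · simp [Dc_zero_right]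
      · obtain ⟨i, rfl⟩ : ∃ i, j = i + 1 := ⟨j - 1, by omega⟩
        have hi : 1 ≤ i := by omega
        rw [Dc_eq]
        have : (1 + i).choose (2 * i + 1) = 0 := Nat.choose_eq_zero_of_lt (by omega)
        rw [this]
        simp
  | (n+2), j => by
    rw [Ap]
    have hXmul : (((2 : Polynomial ℂ) - Polynomial.X) * Ap (n+1)).coeff j
        = 2 * (Ap (n+1)).coeff j - (Polynomial.X * Ap (n+1)).coeff j := by
      rw [sub_mul, coeff_sub, coeff_ofNat_mul]
    rw [coeff_sub, coeff_add, hXmul]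
    rcases Nat.eq_zero_or_pos j with rfl | hj0
    · rw [coeff_X_mul_zero]
      simp only [Ap_coeff (n+1) 0, Ap_coeff n 0]
      simp [Dc_zero_right, coeff_ofNat_mul, coeff_X_zero]
    · obtain ⟨i, rfl⟩ : ∃ i, j = i + 1 := ⟨j - 1, by omega⟩
      rw [coeff_X_mul]
      simp only [Ap_coeff (n+1) (i+1), Ap_coeff n (i+1), Ap_coeff (n+1) i]
      have hco : (2 * Polynomial.X : Polynomial ℂ).coeff (i+1)
          = if i + 1 = 1 then 2 else 0 := by
        rcases eq_or_ne i 0 with rfl | hi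
        · simp
        · rw [if_neg (by omega)]
          rw [coeff_ofNat_mul, coeff_X, if_neg (by omega)]
          simp
      rw [hco]
      have hrec := Dc_rec n (i+1) (by omega)
      have hred : i + 1 - 1 = i := by omega
      rw [hred] at hrec
      have hsign : ((-1 : ℂ)) ^ (i + 1 + 1) = (-1) ^ (i+1) * (-1) := by ring
      -- goal: if i+1=1 then ... ; split
      rcases eq_or_ne i 0 with rfl | hi
      · rw [if_pos rfl] at hrec ⊢
        simp only [pow_succ, pow_zero] at *
        linear_combination -hrec
      · rw [if_neg (by omega)] at hrec ⊢
        have : ((-1:ℂ))^(i+1) = -(-1)^i := by ring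
        rw [pow_succ ((-1:ℂ)) (i+1)]
        linear_combination (-1:ℂ)^(i+1) * hrec

theorem stmt_14 (t : ℕ) (ht : 1 ≤ t) (p : ℕ) (hp : p.Prime) (hpt : t < p)
    (ζ : ℂ) (hζ : IsPrimitiveRoot ζ p) :
    qH2t ζ (p - 1) t
      = (-1) ^ t * (Nat.choose (p + t) (2 * t + 1) : ℂ) * (1 - ζ) ^ (2 * t) /
          ((p : ℂ) * ((t : ℂ) + 1)) := by
  have hp2 : 2 ≤ p := hp.two_le
  have hζ1 : ζ ≠ 1 := hζ.ne_one hp.one_lt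
  have hζ0 : ζ ≠ 0 := fun h => by
    have h1 := hζ.pow_eq_one
    rw [h, zero_pow (by omega : p ≠ 0)] at h1
    exact zero_ne_one h1
  have hIcc : Finset.Icc 1 (p-1) = Finset.Ico 1 p := by
    rw [← Finset.Ico_add_one_right_eq_Icc]
    congr 1
    omega
  have hne1 : ∀ k ∈ Finset.Icc 1 (p-1), (1 : ℂ) - ζ ^ k ≠ 0 := by
    intro k hk
    rw [Finset.mem_Icc] at hk
    intro h
    have h2 : ζ ^ k = 1 := by linear_combination -h
    rw [hζ.pow_eq_one_iff_dvd] at h2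
    have := Nat.le_of_dvd (by omega) h2
    omega
  set b : ℕ → ℂ := fun k => ζ ^ k / (1 - ζ ^ k) ^ 2 with hb
  set P : Polynomial ℂ := ∏ k ∈ Finset.Icc 1 (p-1), (Polynomial.C (b k) * Polynomial.X + 1)
    with hP
  -- root products
  have hroots : ∀ w : ℂ, w ^ p - 1 = ∏ i ∈ Finset.range p, (w - ζ ^ i) := by
    intro w
    have h := X_pow_sub_C_eq_prod hζ (by omega : 0 < p) (one_pow p)
    have := congrArg (Polynomial.eval w) h
    simpa [Polynomial.eval_prod] using this
  have hprod1 : ∀ w : ℂ, (w - 1) * ∏ k ∈ Finset.Icc 1 (p-1), (w - ζ ^ k) = w ^ p - 1 := by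
    intro w
    rw [hroots w, Finset.range_eq_Ico, Finset.prod_eq_prod_Ico_succ_bot (by omega : 0 < p)]
    rw [hIcc]
    simp
  have hprodp : ∏ k ∈ Finset.Icc 1 (p-1), (1 - ζ ^ k) = (p : ℂ) := by
    have hζ' : IsPrimitiveRoot ζ ((p - 1) + 1) := by
      convert hζ using 1
      omega
    have h := hζ'.prod_one_sub_pow_eq_order
    rw [hIcc, Finset.prod_Ico_eq_prod_range]
    rw [show p - 1 = p - 1 from rfl] at h
    calc ∏ k ∈ Finset.range (p-1), (1 - ζ ^ (1 + k))
        = ∏ k ∈ Finset.range (p-1), (1 - ζ ^ (k + 1)) := by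
          apply Finset.prod_congr rfl; intro k _; rw [add_comm]
      _ = (p : ℂ) := by rw [h, Nat.cast_sub (by omega : 1 ≤ p)]; push_cast; ring
  have h1ζ : (1:ℂ) - ζ ≠ 0 := sub_ne_zero.mpr (Ne.symm hζ1)
  have hp0 : (p:ℂ) ≠ 0 := Nat.cast_ne_zero.mpr (by omega)
  -- the sign fact
  have h0 : ∑ k ∈ Finset.range p, k = ∑ k ∈ Finset.Ico 1 p, k := by
    rw [Finset.range_eq_Ico, Finset.sum_eq_sum_Ico_succ_bot (by omega : 0 < p)]
    norm_num
  have hSsum : (∑ k ∈ Finset.Icc 1 (p-1), k) * 2 = p * (p - 1) := by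
    rw [hIcc, ← h0, Finset.sum_range_id_mul_two]
  have hsign : (-1 : ℂ)^(p-1) * ζ ^ (∑ k ∈ Finset.Icc 1 (p-1), k) = 1 := by
    rcases eq_or_ne p 2 with rfl | hp2'
    · have hζ2 : ζ = -1 := hζ.eq_neg_one_of_two_right
      have : ∑ k ∈ Finset.Icc 1 (2-1), k = 1 := by decide
      rw [this, hζ2]
      norm_num
    · have hodd : Odd p := hp.odd_of_ne_two hp2'
      obtain ⟨m, hm⟩ : ∃ m, p - 1 = 2 * m := by
        obtain ⟨r, hr⟩ := hodd
        exact ⟨r, by omega⟩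
      have hS : ∑ k ∈ Finset.Icc 1 (p-1), k = p * m := by
        have h2 : (∑ k ∈ Finset.Icc 1 (p-1), k) * 2 = (p * m) * 2 := by
          rw [hSsum, hm]; ring
        exact Nat.eq_of_mul_eq_mul_right (by norm_num) h2
      rw [hS, hm, pow_mul, pow_mul, hζ.pow_eq_one]
      norm_num
  -- the factor identity
  have hfac : ∀ (w x : ℂ), w ≠ 0 → 2 - w - w⁻¹ = x → ∀ k ∈ Finset.Icc 1 (p-1),
      b k * x + 1 = -(ζ^k * ((w - ζ^k) * (w - ζ^(p - k)))) / (w * (1 - ζ^k)^2) := by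
    intro w x hw hx k hk
    have hz : ζ ^ k ≠ 0 := pow_ne_zero _ hζ0
    have h1z : (1:ℂ) - ζ ^ k ≠ 0 := hne1 k hk
    have hkp : p - k + k = p := by
      rw [Finset.mem_Icc] at hk; omega
    have hzz : ζ ^ (p - k) * ζ ^ k = 1 := by
      rw [← pow_add, hkp, hζ.pow_eq_one]
    have huv : w * w⁻¹ = 1 := mul_inv_cancel₀ hw
    subst hx
    rw [hb]
    simp only
    field_simp
    ring_nf
    linear_combination (ζ^k - w) * hzz
  -- the full product evaluation
  have hPeval : ∀ (w x : ℂ), w ≠ 0 → w ≠ 1 → 2 - w - w⁻¹ = x →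
      (p:ℂ)^2 * x * ∏ k ∈ Finset.Icc 1 (p-1), (b k * x + 1) = 2 - w^p - (w⁻¹)^p := by
    intro w x hw hw1' hx
    have hw1 : w - 1 ≠ 0 := sub_ne_zero.mpr hw1'
    have huv : w * w⁻¹ = 1 := mul_inv_cancel₀ hw
    have hxw : x * w = -(w-1)^2 := by linear_combination (-w) * hx - huv
    have hwp : w^p * (w⁻¹)^p = 1 := by rw [← mul_pow, huv, one_pow]
    have hwpow : w^(p-1) * w = w^p := by
      rw [← pow_succ]; congr 1; omega
    set Pi1 : ℂ := ∏ k ∈ Finset.Icc 1 (p-1), (w - ζ^k) with hPi1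
    have hPiEq : (w - 1) * Pi1 = w^p - 1 := hprod1 w
    have hPi2 : ∏ k ∈ Finset.Icc 1 (p-1), (w - ζ^(p - k)) = Pi1 := by
      rw [hPi1]
      refine Finset.prod_nbij' (fun k => p - k) (fun k => p - k) ?_ ?_ ?_ ?_ ?_
      · intro a ha; simp only [Finset.mem_Icc] at ha ⊢; omega
      · intro a ha; simp only [Finset.mem_Icc] at ha ⊢; omega
      · intro a ha; simp only [Finset.mem_Icc] at ha; show p - (p - a) = a; omega
      · intro a ha; simp only [Finset.mem_Icc] at ha; show p - (p - a) = a; omega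
      · intro a ha; rfl
    have hcard : (Finset.Icc 1 (p-1)).card = p - 1 := by
      rw [Nat.card_Icc]; omega
    have hprodall : ∏ k ∈ Finset.Icc 1 (p-1), (b k * x + 1)
        = (-1 : ℂ)^(p-1) * ζ ^ (∑ k ∈ Finset.Icc 1 (p-1), k) * Pi1 * Pi1
            * (w^(p-1) * (p:ℂ)^2)⁻¹ := by
      rw [Finset.prod_congr rfl (hfac w x hw hx)]
      have step : ∀ k ∈ Finset.Icc 1 (p-1),
          -(ζ^k * ((w - ζ^k) * (w - ζ^(p - k)))) / (w * (1 - ζ^k)^2)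
          = (-1) * ζ^k * (w - ζ^k) * (w - ζ^(p-k)) * (w * (1 - ζ^k)^2)⁻¹ := by
        intro k hk
        rw [neg_div, div_eq_mul_inv]
        ring
      rw [Finset.prod_congr rfl step]
      rw [Finset.prod_mul_distrib, Finset.prod_mul_distrib, Finset.prod_mul_distrib,
        Finset.prod_mul_distrib]
      rw [Finset.prod_const, hcard, Finset.prod_pow_eq_pow_sum, hPi2, Finset.prod_inv_distrib]
      congr 2
      rw [Finset.prod_mul_distrib, Finset.prod_const, hcard, Finset.prod_pow, hprodp]
    rw [hprodall, hsign]
    have hPival : Pi1 = (w^p - 1) / (w - 1) := by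
      rw [eq_div_iff hw1]; linear_combination hPiEq
    have hwpm : w^(p-1) ≠ 0 := pow_ne_zero _ hw
    have hwpn : w^p ≠ 0 := pow_ne_zero _ hw
    have hinv : (w^(p-1) * (p:ℂ)^2)⁻¹ = w * (w^p * (p:ℂ)^2)⁻¹ := by
      rw [← hwpow]
      field_simp
    rw [hPival, hinv]
    have final : x * w * (w^p-1)^2 = (2 - w^p - (w⁻¹)^p) * (w-1)^2 * w^p := by
      linear_combination ((w^p-1)^2) * hxw + (w-1)^2 * hwp
    field_simp
    linear_combination final
  -- polynomial identity
  have hPQ : Polynomial.C ((p:ℂ)^2) * (Polynomial.X * P) = Ap p := by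
    apply Polynomial.funext
    intro x
    rw [eval_mul, eval_mul, eval_C, eval_X, hP, eval_prod]
    simp only [eval_add, eval_mul, eval_C, eval_X, eval_one]
    rcases eq_or_ne x 0 with rfl | hx
    · rw [← Polynomial.coeff_zero_eq_eval_zero, Ap_coeff]
      simp [Dc]
    · obtain ⟨s, hs⟩ := IsAlgClosed.exists_pow_nat_eq ((2-x)^2 - 4) (by norm_num : 0 < 2)
      set w : ℂ := ((2-x) + s)/2 with hwdef
      set v : ℂ := ((2-x) - s)/2 with hvdef
      have hwv : w * v = 1 := by
        rw [hwdef, hvdef]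
        field_simp
        linear_combination -hs
      have hw0 : w ≠ 0 := left_ne_zero_of_mul_eq_one hwv
      have hvinv : w⁻¹ = v := inv_eq_of_mul_eq_one_right hwv
      have hx2 : 2 - w - w⁻¹ = x := by
        rw [hvinv, hwdef, hvdef]; ring
      have hw1 : w ≠ 1 := by
        intro h
        rw [h] at hx2
        exact hx (by rw [← hx2]; norm_num)
      rw [← hx2, Ap_eval w hw0 p, hx2]
      linear_combination hPeval w x hw0 hw1 hx2
  -- coefficient extraction
  have hPc : (p:ℂ)^2 * P.coeff t = (-1)^t * ((p:ℂ) * ((p + t).choose (2*t + 1)) / ((t:ℂ)+1)) := by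
    have h := congrArg (fun q : Polynomial ℂ => q.coeff (t+1)) hPQ
    simp only [Polynomial.coeff_C_mul, Polynomial.coeff_X_mul] at h
    rw [Ap_coeff, Dc_eq] at h
    rw [h]
    have hpow : ((-1 : ℂ))^(t+1+1) = (-1)^t := by
      rw [pow_succ, pow_succ]; ring
    rw [hpow]
  -- combinatorial identity : coefficient = elementary symmetric sum
  have hPcoeff : P.coeff t = ∑ T ∈ Finset.powersetCard t (Finset.Icc 1 (p-1)),
      ∏ k ∈ T, b k := by
    rw [hP, Finset.prod_add]
    rw [Polynomial.finset_sum_coeff]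
    have hterm : ∀ T ∈ (Finset.Icc 1 (p-1)).powerset,
        ((∏ k ∈ T, (Polynomial.C (b k) * Polynomial.X)) *
          ∏ k ∈ (Finset.Icc 1 (p-1)) \ T, (1:Polynomial ℂ)).coeff t
        = if T.card = t then ∏ k ∈ T, b k else 0 := by
      intro T _
      rw [Finset.prod_const_one, mul_one, Finset.prod_mul_distrib, Finset.prod_const,
        ← map_prod Polynomial.C b T, Polynomial.coeff_C_mul, Polynomial.coeff_X_pow]
      rcases eq_or_ne T.card t with hco | hco
      · simp [hco]
      · rw [if_neg hco, if_neg (Ne.symm hco), mul_zero]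
    rw [Finset.sum_congr rfl hterm]
    rw [Finset.powersetCard_eq_filter, Finset.sum_filter]
  -- bijection between strictly monotone tuples and subsets
  have hbij : ∀ g : ℕ → ℂ,
      ∑ k ∈ (Fintype.piFinset fun _ : Fin t => Finset.Icc 1 (p-1)).filter
        (fun k => StrictMono k), ∏ i : Fin t, g (k i)
      = ∑ T ∈ Finset.powersetCard t (Finset.Icc 1 (p-1)), ∏ a ∈ T, g a := by
    intro g
    refine Finset.sum_bij' (fun k _ => Finset.image k Finset.univ)
      (fun T hT => fun i : Fin t => T.orderEmbOfFin (Finset.mem_powersetCard.mp hT).2 i)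
      ?_ ?_ ?_ ?_ ?_
    · intro k hk
      obtain ⟨hk1, hk2⟩ := Finset.mem_filter.mp hk
      rw [Finset.mem_powersetCard]
      constructor
      · intro a ha
        obtain ⟨i, _, rfl⟩ := Finset.mem_image.mp ha
        exact (Fintype.mem_piFinset.mp hk1) i
      · rw [Finset.card_image_of_injective _ hk2.injective, Finset.card_univ,
          Fintype.card_fin]
    · intro T hT
      rw [Finset.mem_filter]
      refine ⟨Fintype.mem_piFinset.mpr fun i => ?_, (T.orderEmbOfFin _).strictMono⟩
      exact (Finset.mem_powersetCard.mp hT).1 (Finset.orderEmbOfFin_mem T _ i)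
    · intro k hk
      obtain ⟨hk1, hk2⟩ := Finset.mem_filter.mp hk
      have h := Finset.orderEmbOfFin_unique
        (s := Finset.image k Finset.univ)
        (by rw [Finset.card_image_of_injective _ hk2.injective, Finset.card_univ,
              Fintype.card_fin])
        (fun x => Finset.mem_image_of_mem k (Finset.mem_univ x)) hk2
      exact funext fun i => (congrFun h i).symm
    · intro T hT
      apply Finset.coe_injective
      rw [Finset.coe_image, Finset.coe_univ, Set.image_univ]
      exact Finset.range_orderEmbOfFin T _
    · intro k hk
      obtain ⟨hk1, hk2⟩ := Finset.mem_filter.mp hk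
      exact (Finset.prod_image fun x _ y _ hxy => hk2.injective hxy).symm
  -- put everything together
  have ht0 : ((t:ℂ)+1) ≠ 0 := by exact_mod_cast Nat.succ_ne_zero t
  have hqsum : qH2t ζ (p-1) t = (1-ζ)^(2*t) * P.coeff t := by
    rw [qH2t, hbij (fun a => ζ ^ a / (qint ζ a) ^ 2)]
    have hT : ∀ T ∈ Finset.powersetCard t (Finset.Icc 1 (p-1)),
        ∏ a ∈ T, (ζ ^ a / (qint ζ a) ^ 2) = (1-ζ)^(2*t) * ∏ a ∈ T, b a := by
      intro T hT'
      obtain ⟨hsub, hcardT⟩ := Finset.mem_powersetCard.mp hT'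
      have h1 : ∀ a ∈ T, ζ ^ a / (qint ζ a) ^ 2 = (1-ζ)^2 * b a := by
        intro a ha
        have hz : (1:ℂ) - ζ ^ a ≠ 0 := hne1 a (hsub ha)
        rw [qint, hb]
        simp only
        field_simp
      rw [Finset.prod_congr rfl h1, Finset.prod_mul_distrib, Finset.prod_const, hcardT,
        ← pow_mul]
    rw [Finset.sum_congr rfl hT, ← Finset.mul_sum, hPcoeff]
  rw [hqsum]
  have hPcval : P.coeff t = (-1)^t * ((p + t).choose (2*t + 1) : ℂ) / ((p:ℂ) * ((t:ℂ)+1)) := by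
    have hp2c : ((p:ℂ))^2 ≠ 0 := pow_ne_zero _ hp0
    apply mul_left_cancel₀ hp2c
    rw [hPc]
    field_simp
  rw [hPcval]
  ring

end QHAux
end

section
/- For any positive integer t and any prime p > t, H_{p-1}^q({2}^t; {0}^t) = ∑_{1≤k_1<⋯<k_t≤p-1} 1/([k_1]_q^2 ⋯ [k_t]_q^2) ≡ ( (-1)^t binom(p-1, 2t+1) + binom(p-1, t) ) · (1-q)^{2t} / ((t+1)p) modulo [p]_q. -/
open scoped Classical

/-- The homogeneous multiple `q`-harmonic sum
`H_n^q({2}^t;{0}^t) = ∑_{1≤k_1<⋯<k_t≤n} 1/([k_1]_q^2⋯[k_t]_q^2)`. -/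
noncomputable def qH2t0 (q : ℂ) (n t : ℕ) : ℂ :=
  ∑ k ∈ (Fintype.piFinset fun _ : Fin t => Finset.Icc 1 n).filter
      (fun k => StrictMono k),
    ∏ i : Fin t, 1 / (qint q (k i)) ^ 2

lemma aux_strictMono_sum (t n : ℕ) (f : ℕ → ℂ) :
    ∑ k ∈ (Fintype.piFinset fun _ : Fin t => Finset.Icc 1 n).filter
      (fun k => StrictMono k), ∏ i : Fin t, f (k i)
    = ∑ S ∈ (Finset.Icc 1 n).powersetCard t, ∏ k ∈ S, f k := by
  classical
  refine Finset.sum_bij' (fun k _ => Finset.image k Finset.univ)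
    (fun S hS => S.orderEmbOfFin (Finset.mem_powersetCard.mp hS).2) ?_ ?_ ?_ ?_ ?_
  · intro k hk
    rw [Finset.mem_filter, Fintype.mem_piFinset] at hk
    rw [Finset.mem_powersetCard]
    constructor
    · intro x hx
      obtain ⟨i, _, rfl⟩ := Finset.mem_image.mp hx
      exact hk.1 i
    · rw [Finset.card_image_of_injective _ hk.2.injective, Finset.card_univ,
        Fintype.card_fin]
  · intro S hS
    rw [Finset.mem_filter, Fintype.mem_piFinset]
    exact ⟨fun i => (Finset.mem_powersetCard.mp hS).1 (S.orderEmbOfFin_mem _ i),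
      (S.orderEmbOfFin _).strictMono⟩
  · intro k hk
    rw [Finset.mem_filter] at hk
    have hmem : ∀ i, k i ∈ Finset.image k Finset.univ :=
      fun i => Finset.mem_image_of_mem k (Finset.mem_univ i)
    exact (Finset.orderEmbOfFin_unique _ hmem hk.2).symm
  · intro S hS
    have h := (Finset.mem_powersetCard.mp hS).2
    have : ↑(Finset.image (S.orderEmbOfFin h) Finset.univ) = (S : Set ℕ) := by
      rw [Finset.coe_image, Finset.coe_univ, Set.image_univ]
      exact Finset.range_orderEmbOfFin S h
    exact_mod_cast this
  · intro k hk
    rw [Finset.mem_filter] at hk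
    rw [Finset.prod_image (fun i _ j _ h => hk.2.injective h)]

open Polynomial in
lemma aux_prod_X_sub_zeta (p : ℕ) (hp : p.Prime) (ζ : ℂ) (hζ : IsPrimitiveRoot ζ p) :
    ∏ k ∈ Finset.Icc 1 (p - 1), (X - C (ζ ^ k)) = ∑ j ∈ Finset.range p, (X : ℂ[X]) ^ j := by
  have hp1 := hp.pos
  have : NeZero p := ⟨hp.pos.ne'⟩
  have hIcc : Finset.Icc 1 (p - 1) = Finset.Ico 1 p := by
    ext x; simp only [Finset.mem_Icc, Finset.mem_Ico]; omega
  have hprod : ∏ i ∈ Finset.range p, ((X : ℂ[X]) - C (ζ ^ i)) = X ^ p - 1 := by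
    rw [X_pow_sub_one_eq_prod hp.pos hζ]
    refine Finset.prod_nbij (fun i => ζ ^ i) ?_ ?_ ?_ ?_
    · intro i _
      rw [Polynomial.mem_nthRootsFinset hp.pos, ← pow_mul, mul_comm, pow_mul, hζ.pow_eq_one,
        one_pow]
    · intro i hi j hj hij
      exact hζ.pow_inj (Finset.mem_range.mp hi) (Finset.mem_range.mp hj) hij
    · intro x hx
      rw [Finset.coe_range]
      obtain ⟨i, hi, rfl⟩ := hζ.eq_pow_of_pow_eq_one
        ((Polynomial.mem_nthRootsFinset hp.pos (1 : ℂ)).mp hx)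
      exact ⟨i, hi, rfl⟩
    · intro i _; rfl
  have hsplit : ∏ i ∈ Finset.range p, ((X : ℂ[X]) - C (ζ ^ i))
      = (X - 1) * ∏ k ∈ Finset.Icc 1 (p - 1), (X - C (ζ ^ k)) := by
    rw [hIcc, Finset.range_eq_Ico, Finset.prod_eq_prod_Ico_succ_bot hp.pos]
    simp
  have hgeom : (∑ j ∈ Finset.range p, (X : ℂ[X]) ^ j) * (X - 1) = X ^ p - 1 :=
    geom_sum_mul X p
  have hXne : (X : ℂ[X]) - 1 ≠ 0 := by
    intro h
    have := congrArg (Polynomial.eval 0) h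
    simp at this
  apply mul_right_cancel₀ hXne
  rw [hgeom, ← hprod, hsplit, mul_comm]

open Polynomial in
lemma aux_prod_one_sub_zeta (p : ℕ) (hp : p.Prime) (ζ : ℂ) (hζ : IsPrimitiveRoot ζ p) :
    ∏ k ∈ Finset.Icc 1 (p - 1), (1 - ζ ^ k) = (p : ℂ) := by
  have h := congrArg (Polynomial.eval 1) (aux_prod_X_sub_zeta p hp ζ hζ)
  rw [Polynomial.eval_prod, Polynomial.eval_finset_sum] at h
  simpa using h

open Polynomial in
lemma aux_key_prod (p : ℕ) (hp : p.Prime) (ζ : ℂ) (hζ : IsPrimitiveRoot ζ p) :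
    ∏ k ∈ Finset.Icc 1 (p - 1), (C ((1 - ζ ^ k) ^ 2) - X ^ 2)
      = (∑ j ∈ Finset.range p, ((1:ℂ[X]) + X) ^ j)
        * (∑ j ∈ Finset.range p, ((1:ℂ[X]) - X) ^ j) := by
  have h := aux_prod_X_sub_zeta p hp ζ hζ
  have hplus := congrArg (aeval ((1:ℂ[X]) + X)) h
  have hminus := congrArg (aeval ((1:ℂ[X]) - X)) h
  simp only [map_prod, map_sum, map_sub, map_pow, aeval_X, aeval_C,
    Polynomial.algebraMap_eq] at hplus hminus
  rw [← hplus, ← hminus, ← Finset.prod_mul_distrib]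
  refine Finset.prod_congr rfl fun k _ => ?_
  simp only [map_pow, map_sub, map_one]
  ring

open Polynomial in
lemma coeff_one_sub_X_pow_pow (n e m : ℕ) (he : 0 < e) :
    ((1 - X ^ e : ℂ[X]) ^ n).coeff (e * m) = (-1) ^ m * (n.choose m : ℂ) := by
  have h : (1 - X ^ e : ℂ[X]) = (-(X ^ e)) + 1 := by ring
  rw [h, add_pow, Polynomial.finset_sum_coeff]
  have hterm : ∀ k, ((-((X:ℂ[X]) ^ e)) ^ k * 1 ^ (n - k) * (n.choose k : ℂ[X])).coeff (e * m)
      = if k = m then (-1) ^ m * (n.choose m : ℂ) else 0 := by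
    intro k
    have h2 : (-((X:ℂ[X]) ^ e)) ^ k * 1 ^ (n - k) * (n.choose k : ℂ[X])
        = C ((-1) ^ k * (n.choose k : ℂ)) * X ^ (e * k) := by
      rw [map_mul, map_pow, map_neg, map_one, Polynomial.C_eq_natCast, pow_mul]
      ring
    rw [h2, Polynomial.coeff_C_mul, Polynomial.coeff_X_pow]
    by_cases hk : k = m
    · subst hk; simp
    · have : ¬ (e * m = e * k) := fun hc => hk (Nat.eq_of_mul_eq_mul_left he hc).symm
      simp [this, hk]
  rw [Finset.sum_congr rfl (fun k _ => hterm k)]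
  by_cases hm : m ∈ Finset.range (n + 1)
  · rw [Finset.sum_ite_eq' _ m, if_pos hm]
  · rw [Finset.sum_ite_eq' _ m, if_neg hm]
    have : n < m := by simpa using hm
    simp [Nat.choose_eq_zero_of_lt this]

open Polynomial in
lemma coeff_G (p t : ℕ) :
    ((∑ j ∈ Finset.range p, ((1:ℂ[X]) + X) ^ j)
        * (∑ j ∈ Finset.range p, ((1:ℂ[X]) - X) ^ j)).coeff (2 * t)
      = (-1) ^ t * (p.choose (t + 1) : ℂ) + 2 * (p.choose (2 * t + 2) : ℂ) := by
  set G1 : ℂ[X] := ∑ j ∈ Finset.range p, ((1:ℂ[X]) + X) ^ j with hG1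
  set G2 : ℂ[X] := ∑ j ∈ Finset.range p, ((1:ℂ[X]) - X) ^ j with hG2
  have hA : G1 * X = (1 + X) ^ p - 1 := by
    have h := geom_sum_mul ((1:ℂ[X]) + X) p
    rw [show ((1:ℂ[X]) + X) - 1 = X by ring] at h
    exact h
  have hB : G2 * (-X) = (1 - X) ^ p - 1 := by
    have h := geom_sum_mul ((1:ℂ[X]) - X) p
    rw [show ((1:ℂ[X]) - X) - 1 = -X by ring] at h
    exact h
  have hX2 : (X:ℂ[X]) ^ 2 * (G1 * G2) = -((((1:ℂ[X]) + X) ^ p - 1) * ((1 - X) ^ p - 1)) := by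
    rw [← hA, ← hB]; ring
  have hcoeff : (G1 * G2).coeff (2 * t) = ((X:ℂ[X]) ^ 2 * (G1 * G2)).coeff (2 * t + 2) := by
    rw [Polynomial.coeff_X_pow_mul]
  rw [hcoeff, hX2]
  have hexp : (((1:ℂ[X]) + X) ^ p - 1) * ((1 - X) ^ p - 1)
      = (1 - X ^ 2) ^ p - (1 + X) ^ p - (1 - X) ^ p + 1 := by
    have h12 : ((1:ℂ[X]) + X) * (1 - X) = 1 - X ^ 2 := by ring
    calc (((1:ℂ[X]) + X) ^ p - 1) * ((1 - X) ^ p - 1)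
        = ((1 + X) * (1 - X)) ^ p - (1 + X) ^ p - (1 - X) ^ p + 1 := by rw [mul_pow]; ring
      _ = _ := by rw [h12]
  rw [hexp]
  have c1 : ((1 - X ^ 2 : ℂ[X]) ^ p).coeff (2 * t + 2)
      = (-1) ^ (t + 1) * (p.choose (t + 1) : ℂ) := by
    have := coeff_one_sub_X_pow_pow p 2 (t + 1) (by norm_num)
    rwa [show 2 * (t + 1) = 2 * t + 2 by ring] at this
  have c2 : (((1:ℂ[X]) + X) ^ p).coeff (2 * t + 2) = (p.choose (2 * t + 2) : ℂ) :=
    Polynomial.coeff_one_add_X_pow ℂ p (2 * t + 2)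
  have c3 : (((1:ℂ[X]) - X) ^ p).coeff (2 * t + 2) = (p.choose (2 * t + 2) : ℂ) := by
    have := coeff_one_sub_X_pow_pow p 1 (2 * t + 2) (by norm_num)
    rw [pow_one, one_mul] at this
    rw [this, (show Even (2 * t + 2) from ⟨t + 1, by ring⟩).neg_one_pow, one_mul]
  have c4 : (1 : ℂ[X]).coeff (2 * t + 2) = 0 := by
    rw [Polynomial.coeff_one]; simp
  rw [Polynomial.coeff_neg, Polynomial.coeff_add, Polynomial.coeff_sub, Polynomial.coeff_sub,
    c1, c2, c3, c4]
  ring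

open Polynomial in
lemma prod_C_sub_X_sq_coeff (s : Finset ℕ) (a : ℕ → ℂ) (t : ℕ) (ht : t ≤ s.card) :
    (∏ k ∈ s, (C (a k) - X ^ 2)).coeff (2 * t)
      = (-1) ^ t * ∑ T ∈ s.powersetCard (s.card - t), ∏ k ∈ T, a k := by
  classical
  rw [Finset.prod_congr rfl (fun k (_ : k ∈ s) => sub_eq_add_neg (C (a k)) (X ^ 2)),
    Finset.prod_add, Polynomial.finset_sum_coeff]
  have hterm : ∀ T ∈ s.powerset,
      ((∏ k ∈ T, C (a k)) * ∏ k ∈ s \ T, -((X:ℂ[X]) ^ 2)).coeff (2 * t)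
        = if T.card = s.card - t then (-1) ^ t * ∏ k ∈ T, a k else 0 := by
    intro T hT
    have hTsub := Finset.mem_powerset.mp hT
    have hTcard := Finset.card_le_card hTsub
    have hcard : (s \ T).card = s.card - T.card := Finset.card_sdiff_of_subset hTsub
    rw [Finset.prod_const, ← map_prod]
    have h2 : (C (∏ k ∈ T, a k) : ℂ[X]) * (-((X:ℂ[X]) ^ 2)) ^ (s \ T).card
        = C ((-1) ^ (s \ T).card * ∏ k ∈ T, a k) * X ^ (2 * (s \ T).card) := by
      rw [map_mul, map_pow, map_neg, map_one, pow_mul]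
      ring
    rw [h2, Polynomial.coeff_C_mul, Polynomial.coeff_X_pow]
    by_cases hTm : T.card = s.card - t
    · have hmt : (s \ T).card = t := by omega
      rw [if_pos hTm, hmt, if_pos rfl, mul_one]
    · have hne : ¬ (2 * t = 2 * (s \ T).card) := by omega
      rw [if_neg hTm, if_neg hne, mul_zero]
  rw [Finset.sum_congr rfl hterm, ← Finset.sum_filter, ← Finset.powersetCard_eq_filter,
    Finset.mul_sum]

lemma esymm_inv (s : Finset ℕ) (a : ℕ → ℂ) (ha : ∀ k ∈ s, a k ≠ 0) (t : ℕ) (ht : t ≤ s.card) :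
    ∑ S ∈ s.powersetCard t, ∏ k ∈ S, (a k)⁻¹
      = (∑ T ∈ s.powersetCard (s.card - t), ∏ k ∈ T, a k) / ∏ k ∈ s, a k := by
  classical
  have hprodne : (∏ k ∈ s, a k) ≠ 0 := Finset.prod_ne_zero_iff.mpr ha
  rw [eq_div_iff hprodne, Finset.sum_mul]
  refine Finset.sum_nbij' (fun S => s \ S) (fun T => s \ T) ?_ ?_ ?_ ?_ ?_
  · intro S hS
    obtain ⟨hsub, hcard⟩ := Finset.mem_powersetCard.mp hS
    rw [Finset.mem_powersetCard]
    exact ⟨Finset.sdiff_subset, by rw [Finset.card_sdiff_of_subset hsub, hcard]⟩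
  · intro T hT
    obtain ⟨hsub, hcard⟩ := Finset.mem_powersetCard.mp hT
    rw [Finset.mem_powersetCard]
    refine ⟨Finset.sdiff_subset, ?_⟩
    rw [Finset.card_sdiff_of_subset hsub, hcard]
    omega
  · intro S hS
    obtain ⟨hsub, _⟩ := Finset.mem_powersetCard.mp hS
    show s \ (s \ S) = S
    rw [Finset.sdiff_sdiff_self_left, Finset.inter_eq_right.mpr hsub]
  · intro T hT
    obtain ⟨hsub, _⟩ := Finset.mem_powersetCard.mp hT
    show s \ (s \ T) = T
    rw [Finset.sdiff_sdiff_self_left, Finset.inter_eq_right.mpr hsub]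
  · intro S hS
    obtain ⟨hsub, _⟩ := Finset.mem_powersetCard.mp hS
    rw [← Finset.prod_sdiff hsub]
    rw [show (∏ k ∈ S, (a k)⁻¹) * ((∏ k ∈ s \ S, a k) * ∏ k ∈ S, a k)
        = (∏ k ∈ s \ S, a k) * ((∏ k ∈ S, (a k)⁻¹) * ∏ k ∈ S, a k) by ring,
      ← Finset.prod_mul_distrib]
    rw [Finset.prod_congr rfl (fun k hk => inv_mul_cancel₀ (ha k (hsub hk))),
      Finset.prod_const_one, mul_one]

theorem stmt_15 (t : ℕ) (ht : 1 ≤ t) (p : ℕ) (hp : p.Prime) (hpt : t < p)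
    (ζ : ℂ) (hζ : IsPrimitiveRoot ζ p) :
    qH2t0 ζ (p - 1) t
      = ((-1) ^ t * (Nat.choose (p - 1) (2 * t + 1) : ℂ) + (Nat.choose (p - 1) t : ℂ)) *
          (1 - ζ) ^ (2 * t) / (((t : ℂ) + 1) * (p : ℂ)) := by
  have hp1 : 1 < p := hp.one_lt
  set s : Finset ℕ := Finset.Icc 1 (p - 1) with hs
  have hscard : s.card = p - 1 := by rw [hs, Nat.card_Icc]; omega
  have htn : t ≤ s.card := by omega
  set a : ℕ → ℂ := fun k => (1 - ζ ^ k) ^ 2 with ha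
  have hane : ∀ k ∈ s, a k ≠ 0 := by
    intro k hk
    rw [hs, Finset.mem_Icc] at hk
    apply pow_ne_zero
    rw [sub_ne_zero]
    exact fun h => hζ.pow_ne_one_of_pos_of_lt (by omega) (by omega) h.symm
  have hpne : (p : ℂ) ≠ 0 := Nat.cast_ne_zero.mpr hp.pos.ne'
  have ht1ne : ((t : ℂ) + 1) ≠ 0 := Nat.cast_add_one_ne_zero t
  -- Step 1: rewrite the q-harmonic sum via subsets
  have step2 : qH2t0 ζ (p - 1) t
      = (1 - ζ) ^ (2 * t) * ∑ S ∈ s.powersetCard t, ∏ k ∈ S, (a k)⁻¹ := by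
    rw [qH2t0, aux_strictMono_sum t (p - 1) (fun k => 1 / qint ζ k ^ 2), Finset.mul_sum]
    refine Finset.sum_congr rfl fun S hS => ?_
    rw [show ∏ k ∈ S, (1 / (qint ζ k) ^ 2) = ∏ k ∈ S, ((1 - ζ) ^ 2 * (a k)⁻¹) from
      Finset.prod_congr rfl fun k _ => by
        rw [qint, ha, div_pow, one_div, inv_div, div_eq_mul_inv],
      Finset.prod_mul_distrib, Finset.prod_const, (Finset.mem_powersetCard.mp hS).2,
      ← pow_mul]
  rw [step2, esymm_inv s a hane t htn]
  -- The numerator sum via coefficients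
  have hG : (∏ k ∈ s, (Polynomial.C (a k) - Polynomial.X ^ 2))
      = (∑ j ∈ Finset.range p, ((1:Polynomial ℂ) + Polynomial.X) ^ j)
        * (∑ j ∈ Finset.range p, ((1:Polynomial ℂ) - Polynomial.X) ^ j) := by
    rw [hs, ha]; exact aux_key_prod p hp ζ hζ
  have hco := prod_C_sub_X_sq_coeff s a t htn
  rw [hG, coeff_G] at hco
  have hSigma : ∑ T ∈ s.powersetCard (s.card - t), ∏ k ∈ T, a k
      = (-1:ℂ) ^ t * ((-1) ^ t * (p.choose (t + 1) : ℂ) + 2 * (p.choose (2 * t + 2) : ℂ)) := by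
    have h0 : ∑ T ∈ s.powersetCard (s.card - t), ∏ k ∈ T, a k
        = (-1:ℂ) ^ t * ((-1:ℂ) ^ t * ∑ T ∈ s.powersetCard (s.card - t), ∏ k ∈ T, a k) := by
      rw [← mul_assoc, ← mul_pow]; norm_num
    rw [h0, ← hco]
  have hprod : ∏ k ∈ s, a k = (p : ℂ) ^ 2 := by
    rw [ha]
    simp only
    rw [Finset.prod_pow, hs, aux_prod_one_sub_zeta p hp ζ hζ]
  rw [hSigma, hprod]
  -- Final arithmetic
  have h1 : p * (p - 1).choose t = p.choose (t + 1) * (t + 1) := by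
    have h := Nat.add_one_mul_choose_eq (p - 1) t
    have hpp : p - 1 + 1 = p := by omega
    rw [hpp] at h
    simpa [Nat.succ_eq_add_one] using h
  have h2 : p * (p - 1).choose (2 * t + 1) = p.choose (2 * t + 2) * (2 * t + 2) := by
    have h := Nat.add_one_mul_choose_eq (p - 1) (2 * t + 1)
    have hpp : p - 1 + 1 = p := by omega
    rw [hpp] at h
    simpa [Nat.succ_eq_add_one] using h
  have hc1 : (p : ℂ) * ((p - 1).choose t : ℂ) = (p.choose (t + 1) : ℂ) * ((t : ℂ) + 1) := by
    exact_mod_cast congrArg (Nat.cast : ℕ → ℂ) h1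
  have hc2 : (p : ℂ) * ((p - 1).choose (2 * t + 1) : ℂ)
      = (p.choose (2 * t + 2) : ℂ) * (2 * (t : ℂ) + 2) := by
    have := congrArg (Nat.cast : ℕ → ℂ) h2
    push_cast at this
    convert this using 2 <;> push_cast <;> ring
  have hsq : (-1 : ℂ) ^ t * (-1 : ℂ) ^ t = 1 := by
    rw [← mul_pow]; norm_num
  rw [mul_div_assoc', div_eq_div_iff (pow_ne_zero 2 hpne) (mul_ne_zero ht1ne hpne)]
  linear_combination ((1 - ζ) ^ (2 * t) * ((t : ℂ) + 1) * (p : ℂ) * (p.choose (t + 1) : ℂ)) * hsq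
    - ((1 - ζ) ^ (2 * t) * (p : ℂ)) * hc1
    - ((1 - ζ) ^ (2 * t) * (p : ℂ) * (-1 : ℂ) ^ t) * hc2
end

section
/- Let p be a prime. Then as polynomials in x modulo [p]_q (i.e., each coefficient congruence holds modulo the p-th cyclotomic polynomial [p]_q = 1+q+⋯+q^{p-1} after clearing denominators), ∏_{k=1}^{p-1} (1 + x/(1-q^k)) ≡ -(1-(1+x)^p)/(px). -/
open Finset Polynomial

lemma aux_prod_y_sub (p : ℕ) (hp : 0 < p) (ζ : ℂ) (hζ : IsPrimitiveRoot ζ p) (y : ℂ) :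
    ∏ i ∈ Finset.range p, (y - ζ ^ i) = y ^ p - 1 := by
  have h := X_pow_sub_C_eq_prod hζ hp (one_pow p)
  have := congrArg (Polynomial.eval y) h
  simpa [Polynomial.eval_prod] using this.symm

/-- The generating-function congruence
`∏_{k=1}^{p-1}(1 + x/(1-q^k)) ≡ -(1-(1+x)^p)/(px) (mod [p]_q)`, expressed as an equality of
functions of `x` at any primitive `p`-th root of unity `ζ` (the roots of `[p]_q = Φ_p`). -/
theorem stmt_16 (p : ℕ) (hp : p.Prime) (ζ : ℂ) (hζ : IsPrimitiveRoot ζ p)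
    (x : ℂ) (hx : x ≠ 0) :
    ∏ k ∈ Finset.Icc 1 (p - 1), (1 + x / (1 - ζ ^ k))
      = -(1 - (1 + x) ^ p) / ((p : ℂ) * x) := by
  have hp0 : 0 < p := hp.pos
  have hne : ∀ k ∈ Finset.Icc 1 (p - 1), (1 : ℂ) - ζ ^ k ≠ 0 := by
    intro k hk
    rw [Finset.mem_Icc] at hk
    rw [sub_ne_zero]
    intro h
    have := hζ.pow_eq_one_iff_dvd k |>.mp h.symm
    have hk1 : 1 ≤ k := hk.1
    have hk2 : k ≤ p - 1 := hk.2
    have : p ≤ k := Nat.le_of_dvd (by omega) this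
    omega
  -- rewrite each factor
  have hfac : ∀ k ∈ Finset.Icc 1 (p - 1), (1 + x / (1 - ζ ^ k))
      = ((1 + x) - ζ ^ k) / (1 - ζ ^ k) := by
    intro k hk
    field_simp [hne k hk]
    ring
  rw [Finset.prod_congr rfl hfac, Finset.prod_div_distrib]
  -- Icc 1 (p-1) as range (p-1) shifted
  have hIcc : Finset.Icc 1 (p - 1) = Finset.map ⟨fun i => i + 1, add_left_injective 1⟩
      (Finset.range (p - 1)) := by
    ext k
    simp only [Finset.mem_Icc, Finset.mem_map, Finset.mem_range, Function.Embedding.coeFn_mk]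
    constructor
    · rintro ⟨h1, h2⟩; exact ⟨k - 1, by omega, by omega⟩
    · rintro ⟨i, hi, rfl⟩; omega
  have hsucc : p - 1 + 1 = p := by omega
  -- denominator product = p
  have hden : ∏ k ∈ Finset.Icc 1 (p - 1), ((1 : ℂ) - ζ ^ k) = (p : ℂ) := by
    rw [hIcc, Finset.prod_map]
    have := hζ
    rw [← hsucc] at this
    have h := IsPrimitiveRoot.prod_one_sub_pow_eq_order this
    have hc : ((p - 1 : ℕ) : ℂ) + 1 = (p : ℂ) := by exact_mod_cast congrArg (Nat.cast : ℕ → ℂ) hsucc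
    rw [hc] at h
    exact h
  -- numerator product
  have hnum : ∏ k ∈ Finset.Icc 1 (p - 1), ((1 + x) - ζ ^ k) = ((1 + x) ^ p - 1) / x := by
    have hfull := aux_prod_y_sub p hp0 ζ hζ (1 + x)
    have hsplit : ∏ i ∈ Finset.range p, ((1 + x) - ζ ^ i)
        = ((1 + x) - 1) * ∏ i ∈ Finset.range (p - 1), ((1 + x) - ζ ^ (i + 1)) := by
      rw [← hsucc, Finset.prod_range_succ']
      simp [mul_comm]
    rw [hsplit] at hfull
    have : ∏ k ∈ Finset.Icc 1 (p - 1), ((1 + x) - ζ ^ k)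
        = ∏ i ∈ Finset.range (p - 1), ((1 + x) - ζ ^ (i + 1)) := by
      rw [hIcc, Finset.prod_map]; rfl
    rw [this]
    have hx' : (1 + x) - 1 = x := by ring
    rw [hx'] at hfull
    rw [eq_div_iff hx]
    linear_combination hfull
  rw [hnum, hden]
  rw [div_div, neg_sub, mul_comm]
end

section
/- Let p, s be positive integers and δ ∈ {0,1}. Define T(p,s,δ) as the coefficient of x^{3s} in ∑_{k=0}^{p-δ} (-1)^k binom(p-k-δ, k-δ) (2-x)^{p-2k} (1+x)^{s-k}. Then T(p,s,δ) = (-1)^δ binom(s+p-2δ+1, 3s+1). -/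
/-- Integer power of a formal power series over `ℚ` (negative powers via the formal inverse,
which is the genuine inverse when the constant term is nonzero). -/
noncomputable def ipow (f : PowerSeries ℚ) (m : ℤ) : PowerSeries ℚ :=
  if 0 ≤ m then f ^ m.toNat else (f ^ (-m).toNat)⁻¹

/-- Binomial coefficient `binom(m, j)` with integer lower index, vanishing for `j < 0`. -/
def ichoose (m : ℕ) (j : ℤ) : ℤ :=
  if j < 0 then 0 else m.choose j.toNat

open PowerSeries Finset

noncomputable section Aux17

abbrev R17 : Type := PowerSeries ℚ

/-- Catalan generating function. -/
def cc : R17 := PowerSeries.mk fun n => (catalan n : ℚ)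

lemma key_cc : cc = 1 + X * cc ^ 2 := by
  ext n
  cases n with
  | zero => simp [cc]
  | succ n =>
    rw [map_add, PowerSeries.coeff_succ_X_mul]
    simp only [cc, coeff_mk, pow_two, PowerSeries.coeff_mul, coeff_mk]
    rw [catalan_succ' n]
    push_cast
    simp [PowerSeries.coeff_one]

lemma hceq : cc - 1 = X * cc ^ 2 := by
  conv_lhs => rw [key_cc]
  ring

/-- geometric series, inverse of 1 - X -/
def gi : R17 := PowerSeries.mk fun _ => (1 : ℚ)

lemma hgi : (1 - X) * gi = 1 := by
  ext n
  cases n with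
  | zero => simp [gi, PowerSeries.coeff_one]
  | succ n =>
    rw [sub_mul, map_sub, one_mul, PowerSeries.coeff_succ_X_mul]
    simp [gi, PowerSeries.coeff_one]

/-- inverse of cc -/
def ci : R17 := 1 - X * cc

lemma hci : cc * ci = 1 := by
  unfold ci
  linear_combination hceq

/-- geometric series with ratio 4, inverse of 1 - 4X -/
def m4 : R17 := PowerSeries.mk fun n => (4 : ℚ) ^ n

lemma hm4 : (1 - 4 * X) * m4 = 1 := by
  ext n
  cases n with
  | zero => simp [m4, PowerSeries.coeff_one]
  | succ n =>
    rw [sub_mul, map_sub, one_mul, mul_assoc,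
      show (4 : R17) = C (R := ℚ) 4 from by rw [map_ofNat],
      PowerSeries.coeff_C_mul, PowerSeries.coeff_succ_X_mul]
    simp [m4, PowerSeries.coeff_one]
    ring

/-- inverse of 2 - cc -/
def ti : R17 := m4 * (1 - 2 * X - X * cc)

lemma hti : (2 - cc) * ti = 1 := by
  have h : (2 - cc) * (1 - 2 * X - X * cc) = 1 - 4 * X := by
    linear_combination (-1 : R17) * hceq
  unfold ti
  calc (2 - cc) * (m4 * (1 - 2*X - X*cc)) = ((2 - cc) * (1 - 2*X - X*cc)) * m4 := by ring
  _ = 1 := by rw [h, hm4]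

def qq : R17 := -((1 - X) * cc)
def qi : R17 := -(gi * ci)

lemma hqi : qq * qi = 1 := by
  unfold qq qi
  calc -((1-X)*cc) * -(gi*ci) = ((1-X)*gi) * (cc*ci) := by ring
  _ = 1 := by rw [hgi, hci, one_mul]

def rr : R17 := -(X * cc * gi)

lemma hqr : qq * rr = cc - 1 := by
  unfold qq rr
  calc -((1-X)*cc) * -(X*cc*gi) = ((1-X)*gi) * (X * cc^2) := by ring
  _ = cc - 1 := by rw [hgi, one_mul, ← hceq]

lemma h1q : 1 + qq = -(X ^ 2 * cc ^ 3) := by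
  unfold qq
  linear_combination (-1 - X * cc) * hceq

lemma h1r : 1 + rr = gi * ci ^ 2 := by
  unfold rr ci
  linear_combination (X * gi) * hceq - hgi

/-- (1-X)^(-(K+1)) -/
def Gk (K : ℕ) : R17 := PowerSeries.mk fun k => ((k + K).choose K : ℚ)

lemma hGk_step (K : ℕ) : (1 - X) * Gk (K + 1) = Gk K := by
  ext n
  cases n with
  | zero => simp [Gk, PowerSeries.coeff_one]
  | succ n =>
    rw [sub_mul, map_sub, one_mul, PowerSeries.coeff_succ_X_mul]
    simp only [Gk, coeff_mk]
    rw [show n + 1 + (K+1) = (n + (K+1)) + 1 from by omega, Nat.choose_succ_succ]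
    push_cast
    rw [Nat.succ_eq_add_one]
    push_cast
    ring

lemma hGk : ∀ K : ℕ, (1 - X) ^ (K + 1) * Gk K = 1
  | 0 => by
    have : Gk 0 = gi := by ext n; simp [Gk, gi]
    rw [this, pow_one, hgi]
  | (K + 1) => by
    rw [pow_succ, mul_assoc, hGk_step, hGk K]

lemma gi_pow_eq_Gk (K : ℕ) : gi ^ (K + 1) = Gk K := by
  have h1 : (1 - X) ^ (K + 1) * gi ^ (K + 1) = 1 := by
    rw [← mul_pow, hgi, one_pow]
  have hne : (1 - X : R17) ^ (K + 1) ≠ 0 := by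
    intro h
    have := congrArg (fun f => f * Gk K) h
    simp only [zero_mul] at this
    rw [hGk K] at this
    exact one_ne_zero this
  exact mul_left_cancel₀ hne (by rw [h1, hGk K])

abbrev B17 : Type := PowerSeries R17

/-- expansion of (X - q)⁻¹ -/
def E1 : B17 := PowerSeries.mk fun i => -(qi ^ (i + 1))

lemma hE1 : (X - PowerSeries.C (R := R17) qq) * E1 = 1 := by
  apply PowerSeries.ext
  intro n
  rw [sub_mul, map_sub]
  cases n with
  | zero =>
    rw [PowerSeries.coeff_zero_X_mul, PowerSeries.coeff_C_mul]
    simp only [E1, coeff_mk, PowerSeries.coeff_one, if_pos rfl]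
    rw [pow_one, mul_neg, hqi, zero_sub, neg_neg, if_pos trivial]
  | succ n =>
    rw [PowerSeries.coeff_succ_X_mul, PowerSeries.coeff_C_mul]
    simp only [E1, coeff_mk, PowerSeries.coeff_one, Nat.succ_ne_zero, if_false]
    have h2 : qq * qi ^ (n + 1 + 1) = qi ^ (n + 1) := by
      rw [pow_succ' qi (n+1), ← mul_assoc, hqi, one_mul]
    rw [mul_neg, h2, sub_neg_eq_add, neg_add_cancel]

/-- expansion of (1 - r X)⁻¹ -/
def E2 : B17 := PowerSeries.mk fun j => rr ^ j

lemma hE2 : (1 - PowerSeries.C (R := R17) rr * X) * E2 = 1 := by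
  apply PowerSeries.ext
  intro n
  rw [sub_mul, map_sub, one_mul, mul_assoc, PowerSeries.coeff_C_mul]
  cases n with
  | zero =>
    rw [PowerSeries.coeff_zero_X_mul]
    simp [E2, PowerSeries.coeff_one]
  | succ n =>
    rw [PowerSeries.coeff_succ_X_mul]
    simp only [E2, coeff_mk, PowerSeries.coeff_one, Nat.succ_ne_zero, if_false]
    rw [pow_succ', mul_comm rr (rr ^ n), sub_self]

/-- the denominator series -/
def Dh : B17 := PowerSeries.C (R := R17) ((1-X)^2) + PowerSeries.C (R := R17) (1-X) * X + PowerSeries.C (R := R17) X * X^2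

lemma hDfact : Dh = PowerSeries.C (R := R17) ((1-X)*ci) * ((X - PowerSeries.C (R := R17) qq) * ((1 : B17) - PowerSeries.C (R := R17) rr * X)) := by
  have e1 : (1-X)*ci*qq = -((1-X)^2) := by
    unfold qq ci
    calc (1-X)*(1 - X*cc)*(-((1-X)*cc)) = -((1-X)^2) * (cc * (1 - X*cc)) := by ring
    _ = -((1-X)^2) := by rw [show cc * (1 - X*cc) = cc * ci from rfl, hci, mul_one]
  have e2 : (1-X)*ci*(1 + qq*rr) = 1 - X := by
    rw [hqr]
    calc (1-X)*ci*(1 + (cc - 1)) = (1-X) * (cc * ci) := by ring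
    _ = 1 - X := by rw [hci, mul_one]
  have e3 : (1-X)*ci*rr = -X := by
    unfold rr ci
    calc (1-X)*(1 - X*cc)*(-(X*cc*gi)) = -X * (((1-X)*gi) * (cc * (1 - X*cc))) := by ring
    _ = -X := by rw [hgi, show cc * (1 - X*cc) = cc * ci from rfl, hci, one_mul, mul_one]
  have expand : PowerSeries.C (R := R17) ((1-X)*ci) * ((X - PowerSeries.C (R := R17) qq) * ((1:B17) - PowerSeries.C (R := R17) rr * X))
      = PowerSeries.C (R := R17) (-((1-X)*ci*qq)) + PowerSeries.C (R := R17) ((1-X)*ci*(1 + qq*rr)) * X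
        + PowerSeries.C (R := R17) (-((1-X)*ci*rr)) * X^2 := by
    simp only [map_neg, map_mul, map_add, map_one, map_sub]
    ring
  rw [expand, e1, e2, e3, neg_neg, neg_neg]
  rfl

/-- the main series -/
def Sn (N : ℕ) : B17 := PowerSeries.C (R := R17) (X * cc * gi * ti) * ((1 + X)^N * (E1 + PowerSeries.C (R := R17) rr * E2))

lemma hIS (N : ℕ) : Dh * Sn N = PowerSeries.C (R := R17) X * (1 + X)^N := by
  unfold Sn
  rw [hDfact]
  have collapse : ((X - PowerSeries.C (R := R17) qq) * ((1:B17) - PowerSeries.C (R := R17) rr * X)) * (E1 + PowerSeries.C (R := R17) rr * E2)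
      = PowerSeries.C (R := R17) (2 - cc) := by
    calc ((X - PowerSeries.C (R := R17) qq) * ((1:B17) - PowerSeries.C (R := R17) rr * X)) * (E1 + PowerSeries.C (R := R17) rr * E2)
        = ((1:B17) - PowerSeries.C (R := R17) rr * X) * ((X - PowerSeries.C (R := R17) qq) * E1)
          + PowerSeries.C (R := R17) rr * ((X - PowerSeries.C (R := R17) qq) * (((1:B17) - PowerSeries.C (R := R17) rr * X) * E2)) := by ring
      _ = ((1:B17) - PowerSeries.C (R := R17) rr * X) + PowerSeries.C (R := R17) rr * (X - PowerSeries.C (R := R17) qq) := by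
          rw [hE1, hE2, mul_one, mul_one]
      _ = (1:B17) - PowerSeries.C (R := R17) (rr * qq) := by rw [map_mul]; ring
      _ = PowerSeries.C (R := R17) (2 - cc) := by
          rw [show rr * qq = cc - 1 from by rw [mul_comm, hqr]]
          simp only [map_sub, map_one, map_ofNat]
          ring
  calc PowerSeries.C (R := R17) ((1-X)*ci) * ((X - PowerSeries.C (R := R17) qq) * ((1:B17) - PowerSeries.C (R := R17) rr * X))
        * (PowerSeries.C (R := R17) (X * cc * gi * ti) * ((1 + X)^N * (E1 + PowerSeries.C (R := R17) rr * E2)))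
      = (PowerSeries.C (R := R17) ((1-X)*ci) * PowerSeries.C (R := R17) (X * cc * gi * ti)
          * (((X - PowerSeries.C (R := R17) qq) * ((1:B17) - PowerSeries.C (R := R17) rr * X)) * (E1 + PowerSeries.C (R := R17) rr * E2)))
        * (1 + X)^N := by ring
    _ = (PowerSeries.C (R := R17) ((1-X)*ci * (X * cc * gi * ti) * (2 - cc))) * (1 + X)^N := by
        rw [collapse, ← map_mul, ← map_mul]
    _ = PowerSeries.C (R := R17) X * (1 + X)^N := by
        congr 1
        congr 1
        calc (1-X)*ci * (X * cc * gi * ti) * (2 - cc)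
            = ((1-X)*gi) * (cc*ci) * ((2-cc)*ti) * X := by ring
          _ = X := by rw [hgi, hci, hti]; ring

/-- embedding of x-series as z-constant elements of B17 -/
def emb : R17 →+* B17 := PowerSeries.map (PowerSeries.C (R := ℚ))

/-- slc n f = the x-series whose m-th coefficient is the z^n-coefficient of the m-th
x-coefficient of f -/
def slc (n : ℕ) (f : B17) : R17 :=
  PowerSeries.mk fun m => PowerSeries.coeff (R := ℚ) n (PowerSeries.coeff (R := R17) m f)

lemma slice_add (n : ℕ) (f g : B17) : slc n (f + g) = slc n f + slc n g := by
  apply PowerSeries.ext; intro m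
  simp [slc]

lemma slice_sub (n : ℕ) (f g : B17) : slc n (f - g) = slc n f - slc n g := by
  apply PowerSeries.ext; intro m
  simp [slc]

lemma slice_emb_mul (n : ℕ) (g : R17) (f : B17) :
    slc n (emb g * f) = g * slc n f := by
  apply PowerSeries.ext; intro m
  rw [slc, coeff_mk, PowerSeries.coeff_mul, PowerSeries.coeff_mul, map_sum]
  refine Finset.sum_congr rfl fun p _ => ?_
  rw [emb, PowerSeries.coeff_map, PowerSeries.coeff_C_mul, slc, coeff_mk]

lemma slice_emb_zero (g : R17) : slc 0 (emb g) = g := by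
  apply PowerSeries.ext; intro m
  rw [slc, coeff_mk, emb, PowerSeries.coeff_map, PowerSeries.coeff_zero_eq_constantCoeff,
    PowerSeries.constantCoeff_C]

lemma slice_emb_succ (n : ℕ) (g : R17) : slc (n+1) (emb g) = 0 := by
  apply PowerSeries.ext; intro m
  rw [slc, coeff_mk, emb, PowerSeries.coeff_map, PowerSeries.coeff_C]
  simp

lemma slice_Cz_zero (f : B17) : slc 0 (PowerSeries.C (R := R17) X * f) = 0 := by
  apply PowerSeries.ext; intro m
  rw [slc, coeff_mk, PowerSeries.coeff_C_mul, PowerSeries.coeff_zero_eq_constantCoeff]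
  simp [PowerSeries.constantCoeff_X]

lemma slice_Cz_succ (n : ℕ) (f : B17) :
    slc (n+1) (PowerSeries.C (R := R17) X * f) = slc n f := by
  apply PowerSeries.ext; intro m
  rw [slc, coeff_mk, PowerSeries.coeff_C_mul, PowerSeries.coeff_succ_X_mul, slc, coeff_mk]

lemma Dh_decomp : Dh = emb (1 + X) - PowerSeries.C (R := R17) X * emb (2 + X - X^2)
    + PowerSeries.C (R := R17) X * (PowerSeries.C (R := R17) X * 1) := by
  unfold Dh emb
  simp only [map_add, map_sub, map_one, map_pow, map_ofNat, PowerSeries.map_X, mul_one]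
  ring

lemma slice_Dh_zero (f : B17) : slc 0 (Dh * f) = (1 + X) * slc 0 f := by
  rw [Dh_decomp, add_mul, sub_mul, slice_add, slice_sub, mul_one, mul_assoc,
    slice_Cz_zero, mul_assoc, slice_Cz_zero, slice_emb_mul]
  ring

lemma slice_Dh_one (f : B17) :
    slc 1 (Dh * f) = (1 + X) * slc 1 f - (2 + X - X^2) * slc 0 f := by
  rw [Dh_decomp, add_mul, sub_mul, slice_add, slice_sub, mul_one, mul_assoc,
    slice_Cz_succ, mul_assoc, slice_Cz_succ, slice_Cz_zero, slice_emb_mul, slice_emb_mul,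
    add_zero]

lemma slice_Dh_two (n : ℕ) (f : B17) :
    slc (n+2) (Dh * f) = (1 + X) * slc (n+2) f - (2 + X - X^2) * slc (n+1) f + slc n f := by
  rw [Dh_decomp, add_mul, sub_mul, slice_add, slice_sub, mul_one, mul_assoc,
    slice_Cz_succ, mul_assoc, slice_Cz_succ, slice_Cz_succ, slice_emb_mul, slice_emb_mul]

lemma one_add_X_ne : (1 + X : R17) ≠ 0 := by
  intro h
  have := congrArg (PowerSeries.constantCoeff (R := ℚ)) h
  simp at this

lemma emb_one_add_X_pow (N : ℕ) : ((1 + X : B17))^N = emb ((1 + X : R17)^N) := by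
  rw [map_pow]
  congr 1
  rw [emb]
  simp [PowerSeries.map_X]

lemma sliceSn_zero (N : ℕ) : slc 0 (Sn N) = 0 := by
  have h := congrArg (slc 0) (hIS N)
  rw [slice_Dh_zero, emb_one_add_X_pow, slice_Cz_zero] at h
  rcases mul_eq_zero.mp h with h' | h'
  · exact absurd h' one_add_X_ne
  · exact h'

lemma sliceSn_one (N : ℕ) (hN : 1 ≤ N) : slc 1 (Sn N) = (1 + X)^(N - 1) := by
  have h := congrArg (slc 1) (hIS N)
  rw [slice_Dh_one, emb_one_add_X_pow, slice_Cz_succ, slice_emb_zero, sliceSn_zero] at h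
  apply mul_left_cancel₀ one_add_X_ne
  rw [mul_zero, sub_zero] at h
  rw [h, ← pow_succ']
  congr 1
  omega

lemma sliceSn_rec (N : ℕ) (n : ℕ) :
    (1 + X) * slc (n+2) (Sn N) = (2 + X - X^2) * slc (n+1) (Sn N) - slc n (Sn N) := by
  have h := congrArg (slc (n+2)) (hIS N)
  rw [slice_Dh_two, emb_one_add_X_pow, slice_Cz_succ, slice_emb_succ] at h
  linear_combination h

/-- the Chebyshev-like sequence -/
def Un : ℕ → R17
  | 0 => 0
  | 1 => 1
  | (n+2) => (2 - X) * Un (n+1) - (1 + X)⁻¹ * Un n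

lemma hUinv : (1 + X : R17) * (1 + X)⁻¹ = 1 :=
  PowerSeries.mul_inv_cancel _ (by simp)

lemma claimB (N : ℕ) (hN : 1 ≤ N) : ∀ n, slc n (Sn N) = (1 + X)^(N-1) * Un n := by
  have key : ∀ n, slc n (Sn N) = (1 + X)^(N-1) * Un n ∧
      slc (n+1) (Sn N) = (1 + X)^(N-1) * Un (n+1) := by
    intro n
    induction n with
    | zero =>
      constructor
      · rw [sliceSn_zero, Un]; ring
      · rw [sliceSn_one N hN, Un]; ring
    | succ n ih =>
      refine ⟨ih.2, ?_⟩
      apply mul_left_cancel₀ one_add_X_ne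
      rw [sliceSn_rec, ih.1, ih.2, show n + 1 + 1 = n + 2 from rfl, Un]
      have expand : (1+X : R17) * ((1+X)^(N-1) * ((2 - X) * Un (n+1) - (1+X)⁻¹ * Un n))
          = (1+X)^(N-1) * ((1+X) * (2-X)) * Un (n+1)
            - (1+X)^(N-1) * ((1+X) * (1+X)⁻¹) * Un n := by ring
      rw [expand, hUinv]
      ring
  exact fun n => (key n).1

lemma one_add_X_pow_expand (N : ℕ) : ((1 + X : B17))^N
    = ∑ l ∈ Finset.range (N+1), PowerSeries.C (R := R17) ((N.choose l : ℕ) : R17) * X^l := by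
  rw [show ((1 + X : B17)) = X + 1 from by ring, add_pow]
  refine Finset.sum_congr rfl fun l _ => ?_
  rw [one_pow, map_natCast]
  ring

lemma coeff_pow_mul_mk (N m : ℕ) (h : N ≤ m) (g : ℕ → R17) :
    PowerSeries.coeff (R := R17) m ((1 + X)^N * PowerSeries.mk g)
      = ∑ l ∈ Finset.range (N+1), ((N.choose l : ℕ) : R17) * g (m - l) := by
  rw [one_add_X_pow_expand, Finset.sum_mul, map_sum]
  refine Finset.sum_congr rfl fun l hl => ?_
  have hl' : l ≤ N := by have := Finset.mem_range.mp hl; omega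
  have hlm : l ≤ m := le_trans hl' h
  rw [mul_assoc, PowerSeries.coeff_C_mul, PowerSeries.coeff_X_pow_mul' (PowerSeries.mk g) l m,
    if_pos hlm, coeff_mk]

lemma CrE2_eq : PowerSeries.C (R := R17) rr * E2 = PowerSeries.mk fun j => rr^(j+1) := by
  apply PowerSeries.ext; intro m
  rw [PowerSeries.coeff_C_mul, E2, coeff_mk, coeff_mk, pow_succ']

lemma sum_binom_pow (N : ℕ) (a : R17) :
    ∑ l ∈ Finset.range (N+1), ((N.choose l : ℕ) : R17) * a^l = (1 + a)^N := by
  rw [show ((1:R17) + a) = a + 1 from by ring, add_pow]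
  refine Finset.sum_congr rfl fun l _ => ?_
  rw [one_pow]
  ring

lemma sum_binom_pow' (N : ℕ) (a : R17) :
    ∑ l ∈ Finset.range (N+1), ((N.choose l : ℕ) : R17) * a^(N-l) = (1 + a)^N := by
  rw [add_pow]
  refine Finset.sum_congr rfl fun l _ => ?_
  rw [one_pow]
  ring

lemma coeffSn (N m : ℕ) (h : N ≤ m) :
    PowerSeries.coeff (R := R17) m (Sn N)
      = (X * cc * gi * ti) * (-(qi^(m+1) * (1 + qq)^N) + rr^(m-N+1) * (1 + rr)^N) := by
  have S1 : PowerSeries.coeff (R := R17) m ((1 + X)^N * E1) = -(qi^(m+1) * (1 + qq)^N) := by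
    rw [show E1 = PowerSeries.mk fun i => -(qi^(i+1)) from rfl, coeff_pow_mul_mk N m h]
    have step : ∀ l ∈ Finset.range (N+1),
        ((N.choose l : ℕ) : R17) * (-(qi^((m-l)+1)))
          = -(qi^(m+1)) * (((N.choose l : ℕ) : R17) * qq^l) := by
      intro l hl
      have hl' : l ≤ N := by have := Finset.mem_range.mp hl; omega
      have hlm : l ≤ m := le_trans hl' h
      have hqp : qi^(m+1) * qq^l = qi^((m-l)+1) := by
        have e : m + 1 = ((m-l)+1) + l := by omega
        rw [e, pow_add, mul_assoc, ← mul_pow, mul_comm qi qq, hqi, one_pow, mul_one]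
      rw [← hqp]
      ring
    rw [Finset.sum_congr rfl step, ← Finset.mul_sum, sum_binom_pow N qq]
    ring
  have S2 : PowerSeries.coeff (R := R17) m ((1 + X)^N * (PowerSeries.C (R := R17) rr * E2))
      = rr^(m-N+1) * (1 + rr)^N := by
    rw [CrE2_eq, coeff_pow_mul_mk N m h]
    have step : ∀ l ∈ Finset.range (N+1),
        ((N.choose l : ℕ) : R17) * rr^((m-l)+1)
          = rr^(m-N+1) * (((N.choose l : ℕ) : R17) * rr^(N-l)) := by
      intro l hl
      have hl' : l ≤ N := by have := Finset.mem_range.mp hl; omega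
      have hrp : rr^(m-N+1) * rr^(N-l) = rr^((m-l)+1) := by
        rw [← pow_add]
        congr 1
        omega
      rw [← hrp]
      ring
    rw [Finset.sum_congr rfl step, ← Finset.mul_sum, sum_binom_pow' N rr]
  unfold Sn
  rw [PowerSeries.coeff_C_mul, mul_add, map_add, S1, S2]

lemma ci_sub : ci - X^2 * cc^3 = 2 - cc := by
  unfold ci
  linear_combination (1 + X*cc) * hceq

lemma one_sub_Xcc2 : (1 : R17) - X * cc^2 = 2 - cc := by
  linear_combination hceq

lemma hcol1 (s : ℕ) : cc^(2*s+1) * ci^(2*s+2) = ci := by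
  have e : cc^(2*s+1) * ci^(2*s+2) = (cc*ci)^(2*s+1) * ci := by ring
  rw [e, hci, one_pow, one_mul]

lemma hcol2 (s : ℕ) : cc^(3*s+4) * ci^(3*s+1) = cc^3 := by
  have e : cc^(3*s+4) * ci^(3*s+1) = (cc*ci)^(3*s+1) * cc^3 := by ring
  rw [e, hci, one_pow, one_mul]

lemma hcol3 (s : ℕ) : cc^(3*s+1) * ci^(3*s+1) = 1 := by
  rw [← mul_pow, hci, one_pow]

lemma hcol4 (s : ℕ) : cc^(2*s+2) * ci^(2*s) = cc^2 := by
  have e : cc^(2*s+2) * ci^(2*s) = (cc*ci)^(2*s) * cc^2 := by ring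
  rw [e, hci, one_pow, one_mul]

lemma H0 (s : ℕ) (hs : 1 ≤ s) :
    PowerSeries.coeff (R := R17) (3*s) (Sn (s+1)) = X^(2*s+1) * Gk (3*s+1) := by
  rw [coeffSn (s+1) (3*s) (by omega)]
  rw [show 3*s - (s+1) + 1 = 2*s from by omega]
  rw [show qi = -(gi*ci) from rfl, h1q, h1r, show rr = -(X*cc*gi) from rfl]
  rw [show 3*s + 1 = 3*s+1 from rfl]
  rw [neg_pow (gi*ci), neg_pow (X^2*cc^3), neg_pow (X*cc*gi)]
  have sgn1 : ((-1 : R17)^(3*s+1)) * ((-1 : R17)^(s+1)) = 1 := by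
    rw [← pow_add, show 3*s+1 + (s+1) = 2*(2*s+1) from by omega, pow_mul, neg_one_sq, one_pow]
  have sgn2 : ((-1 : R17)^(2*s)) = 1 := by
    rw [pow_mul, neg_one_sq, one_pow]
  have hfin : ti * (ci - X^2*cc^3) = 1 := by
    rw [ci_sub, mul_comm]
    exact hti
  calc X*cc*gi*ti * ( -((-1 : R17)^(3*s+1) * (gi*ci)^(3*s+1) * ((-1 : R17)^(s+1) * (X^2*cc^3)^(s+1))) + (-1 : R17)^(2*s)*(X*cc*gi)^(2*s) * (gi*ci^2)^(s+1) )
      = X*cc*gi*ti * ( -( (((-1 : R17)^(3*s+1)) * ((-1 : R17)^(s+1))) * ((gi*ci)^(3*s+1) * (X^2*cc^3)^(s+1)) ) + ((-1 : R17)^(2*s)) * ((X*cc*gi)^(2*s) * (gi*ci^2)^(s+1)) ) := by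
        ring
    _ = X*cc*gi*ti * ( -((gi*ci)^(3*s+1) * (X^2*cc^3)^(s+1)) + (X*cc*gi)^(2*s) * (gi*ci^2)^(s+1) ) := by
        rw [sgn1, sgn2]; ring
    _ = X^(2*s+1) * gi^(3*s+2) * (ti * ((cc^(2*s+1) * ci^(2*s+2)) - X^2 * (cc^(3*s+4) * ci^(3*s+1)))) := by
        ring
    _ = X^(2*s+1) * gi^(3*s+2) * (ti * (ci - X^2*cc^3)) := by rw [hcol1, hcol2]
    _ = X^(2*s+1) * gi^(3*s+2) := by rw [hfin, mul_one]
    _ = X^(2*s+1) * Gk (3*s+1) := by rw [show 3*s+2 = (3*s+1)+1 from rfl, gi_pow_eq_Gk]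

lemma H1 (s : ℕ) :
    PowerSeries.coeff (R := R17) (3*s) (Sn s) = X^(2*s+1) * Gk (3*s+1) := by
  rw [coeffSn s (3*s) (by omega)]
  rw [show 3*s - s + 1 = 2*s+1 from by omega]
  rw [show qi = -(gi*ci) from rfl, h1q, h1r, show rr = -(X*cc*gi) from rfl]
  rw [neg_pow (gi*ci), neg_pow (X^2*cc^3), neg_pow (X*cc*gi)]
  have sgn3 : ((-1 : R17)^(3*s+1)) * ((-1 : R17)^s) = -1 := by
    rw [← pow_add, show 3*s+1 + s = 2*(2*s)+1 from by omega, pow_succ, pow_mul, neg_one_sq,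
      one_pow, one_mul]
  have sgn4 : ((-1 : R17)^(2*s+1)) = -1 := by
    rw [pow_succ, pow_mul, neg_one_sq, one_pow, one_mul]
  have hfin : ti * ((1:R17) - X*cc^2) = 1 := by
    rw [one_sub_Xcc2, mul_comm]
    exact hti
  calc X*cc*gi*ti * ( -((-1 : R17)^(3*s+1) * (gi*ci)^(3*s+1) * ((-1 : R17)^s * (X^2*cc^3)^s)) + (-1 : R17)^(2*s+1)*(X*cc*gi)^(2*s+1) * (gi*ci^2)^s )
      = X*cc*gi*ti * ( -( (((-1 : R17)^(3*s+1)) * ((-1 : R17)^s)) * ((gi*ci)^(3*s+1) * (X^2*cc^3)^s) ) + ((-1 : R17)^(2*s+1)) * ((X*cc*gi)^(2*s+1) * (gi*ci^2)^s) ) := by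
        ring
    _ = X*cc*gi*ti * ( (gi*ci)^(3*s+1) * (X^2*cc^3)^s - (X*cc*gi)^(2*s+1) * (gi*ci^2)^s ) := by
        rw [sgn3, sgn4]; ring
    _ = X^(2*s+1) * gi^(3*s+2) * (ti * ((cc^(3*s+1) * ci^(3*s+1)) - X * (cc^(2*s+2) * ci^(2*s)))) := by
        ring
    _ = X^(2*s+1) * gi^(3*s+2) * (ti * ((1:R17) - X*cc^2)) := by rw [hcol3, hcol4]
    _ = X^(2*s+1) * gi^(3*s+2) := by rw [hfin, mul_one]
    _ = X^(2*s+1) * Gk (3*s+1) := by rw [show 3*s+2 = (3*s+1)+1 from rfl, gi_pow_eq_Gk]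

lemma coeff_final (s n : ℕ) :
    PowerSeries.coeff (R := ℚ) n (X^(2*s+1) * Gk (3*s+1)) = ((n + s).choose (3*s+1) : ℚ) := by
  rw [PowerSeries.coeff_X_pow_mul']
  split_ifs with h
  · rw [Gk, coeff_mk]
    congr 2
    omega
  · rw [eq_comm, Nat.cast_eq_zero]
    apply Nat.choose_eq_zero_of_lt
    omega

section Ipow

lemma ipow_natCast (f : PowerSeries ℚ) (n : ℕ) : ipow f (n : ℤ) = f ^ n := by
  rw [ipow, if_pos (by positivity), Int.toNat_natCast]

lemma ipow_zero (f : PowerSeries ℚ) : ipow f 0 = 1 := by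
  rw [show (0:ℤ) = ((0:ℕ):ℤ) from rfl, ipow_natCast, pow_zero]

lemma pow_mul_inv_cancel (f : PowerSeries ℚ) (hf : PowerSeries.constantCoeff (R := ℚ) f ≠ 0) (a : ℕ) :
    f^a * (f^a)⁻¹ = 1 :=
  PowerSeries.mul_inv_cancel _ (by rw [map_pow]; exact pow_ne_zero _ hf)

lemma f_ne_zero (f : PowerSeries ℚ) (hf : PowerSeries.constantCoeff (R := ℚ) f ≠ 0) : f ≠ 0 := by
  intro h; apply hf; rw [h, map_zero]

lemma ipow_succ (f : PowerSeries ℚ) (hf : PowerSeries.constantCoeff (R := ℚ) f ≠ 0) (m : ℤ) :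
    ipow f (m + 1) = f * ipow f m := by
  rcases le_or_gt 0 m with hm | hm
  · lift m to ℕ using hm
    rw [show (m:ℤ) + 1 = ((m+1 : ℕ) : ℤ) from by push_cast; ring, ipow_natCast, ipow_natCast,
      pow_succ']
  · rcases eq_or_lt_of_le (by omega : m ≤ -1) with he | hlt
    · subst he
      rw [show (-1 + 1 : ℤ) = 0 from by norm_num, ipow_zero]
      rw [ipow, if_neg (by omega)]
      rw [show (-(-1) : ℤ).toNat = 1 from rfl, pow_one]
      exact (PowerSeries.mul_inv_cancel _ hf).symm
    · have h1 : m + 1 < 0 := by omega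
      rw [ipow, if_neg (by omega), ipow, if_neg (by omega)]
      have ha : (-m).toNat = (-(m+1)).toNat + 1 := by omega
      set a := (-(m+1)).toNat with hadef
      rw [ha]
      have hfa : f^(a+1) ≠ 0 := by
        apply pow_ne_zero
        exact f_ne_zero f hf
      apply mul_left_cancel₀ hfa
      calc f^(a+1) * (f^a)⁻¹ = f * (f^a * (f^a)⁻¹) := by rw [pow_succ']; ring
        _ = f := by rw [pow_mul_inv_cancel f hf, mul_one]
        _ = f * (f^(a+1) * (f^(a+1))⁻¹) := by rw [pow_mul_inv_cancel f hf, mul_one]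
        _ = f^(a+1) * (f * (f^(a+1))⁻¹) := by ring

lemma ipow_pred (f : PowerSeries ℚ) (hf : PowerSeries.constantCoeff (R := ℚ) f ≠ 0) (t : ℤ) :
    ipow f (t - 1) = f⁻¹ * ipow f t := by
  have h := ipow_succ f hf (t - 1)
  rw [sub_add_cancel] at h
  rw [h, ← mul_assoc, mul_comm f⁻¹ f, PowerSeries.mul_inv_cancel _ hf, one_mul]

lemma const1X : PowerSeries.constantCoeff (R := ℚ) (1 + X) ≠ 0 := by simp

lemma const2X : PowerSeries.constantCoeff (R := ℚ) (2 - X) ≠ 0 := by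
  rw [map_sub, map_ofNat, PowerSeries.constantCoeff_X]
  norm_num

end Ipow

/-- The delta = 0 sum. -/
noncomputable def Gsum (p : ℕ) (t : ℤ) : R17 :=
  ∑ k ∈ Finset.range (p+1),
    (((-1:ℚ))^k * (((p-k).choose k : ℕ) : ℚ)) •
      (ipow (2 - X) ((p:ℤ) - 2*(k:ℤ)) * ipow (1 + X) (t - (k:ℤ)))

lemma claimA : ∀ p : ℕ, ∀ t : ℤ, Gsum p t = ipow (1+X) t * Un (p+1) := by
  have key : ∀ p : ℕ, (∀ t, Gsum p t = ipow (1+X) t * Un (p+1)) ∧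
      (∀ t, Gsum (p+1) t = ipow (1+X) t * Un (p+2)) := by
    intro p
    induction p with
    | zero =>
      constructor
      · intro t
        unfold Gsum
        rw [Finset.sum_range_one]
        norm_num [ipow_zero]
        rw [show Un 1 = 1 from rfl, mul_one]
      · intro t
        unfold Gsum
        rw [Finset.sum_range_succ, Finset.sum_range_one]
        norm_num
        rw [show Un 2 = (2 - X) * Un 1 - (1+X)⁻¹ * Un 0 from rfl,
          show Un 1 = 1 from rfl, show Un 0 = 0 from rfl]
        rw [show (1:ℤ) = 0 + 1 from by norm_num, ipow_succ _ const2X, ipow_zero]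
        ring
    | succ p ih =>
      refine ⟨ih.2, fun t => ?_⟩
      have RHSeq : ipow (1+X) t * Un (p+1+2)
          = (2-X) * (ipow (1+X) t * Un (p+2)) - ipow (1+X) (t-1) * Un (p+1) := by
        rw [show Un (p+1+2) = (2 - X) * Un (p+2) - (1+X)⁻¹ * Un (p+1) from rfl,
          ipow_pred _ const1X]
        ring
      rw [RHSeq, ← ih.2 t, ← ih.1 (t-1)]
      -- now a finite-sum identity
      unfold Gsum
      rw [Finset.mul_sum]
      -- rewrite the multiplied sum
      have hF1 : ∀ k ∈ Finset.range (p+2),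
          (2-X) * ((((-1:ℚ))^k * (((p+1-k).choose k : ℕ) : ℚ)) •
            (ipow (2 - X) (((p+1:ℕ):ℤ) - 2*(k:ℤ)) * ipow (1 + X) (t - (k:ℤ))))
          = (((-1:ℚ))^k * (((p+1-k).choose k : ℕ) : ℚ)) •
            (ipow (2 - X) (((p+2:ℕ):ℤ) - 2*(k:ℤ)) * ipow (1 + X) (t - (k:ℤ))) := by
        intro k _
        rw [mul_smul_comm]
        congr 1
        rw [show (((p+2:ℕ):ℤ) - 2*(k:ℤ)) = (((p+1:ℕ):ℤ) - 2*(k:ℤ)) + 1 from by push_cast; ring,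
          ipow_succ _ const2X]
        ring
      rw [Finset.sum_congr rfl hF1]
      -- name the three summand functions
      set F1 : ℕ → R17 := fun k => (((-1:ℚ))^k * (((p+1-k).choose k : ℕ) : ℚ)) •
        (ipow (2 - X) (((p+2:ℕ):ℤ) - 2*(k:ℤ)) * ipow (1 + X) (t - (k:ℤ))) with hF1def
      set F2 : ℕ → R17 := fun k => (((-1:ℚ))^k * (((p-k).choose k : ℕ) : ℚ)) •
        (ipow (2 - X) (((p:ℕ):ℤ) - 2*(k:ℤ)) * ipow (1 + X) ((t-1) - (k:ℤ))) with hF2def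
      set F : ℕ → R17 := fun k => (((-1:ℚ))^k * (((p+2-k).choose k : ℕ) : ℚ)) •
        (ipow (2 - X) (((p+2:ℕ):ℤ) - 2*(k:ℤ)) * ipow (1 + X) (t - (k:ℤ))) with hFdef
      show ∑ k ∈ Finset.range (p+3), F k = ∑ k ∈ Finset.range (p+2), F1 k
        - ∑ k ∈ Finset.range (p+1), F2 k
      have hsplit : ∀ j ∈ Finset.range (p+2), F (j+1) = F1 (j+1) - F2 j := by
        intro j hj
        have hjp : j ≤ p + 1 := by have := Finset.mem_range.mp hj; omega
        rw [hFdef, hF1def, hF2def]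
        simp only []
        have hvec : ipow (2 - X) (((p:ℕ):ℤ) - 2*(j:ℤ)) * ipow (1 + X) ((t-1) - (j:ℤ))
            = ipow (2 - X) (((p+2:ℕ):ℤ) - 2*((j+1:ℕ):ℤ)) * ipow (1 + X) (t - ((j+1:ℕ):ℤ)) := by
          congr 1
          · congr 1; push_cast; ring
          · congr 1; push_cast; ring
        rw [← hvec]
        rw [← sub_smul]
        congr 1
        -- scalar Pascal identity
        have hch : (p+2-(j+1)).choose (j+1) = (p-j).choose j + (p-j).choose (j+1) := by
          rcases le_or_gt j p with hjle | hjgt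
          · rw [show p+2-(j+1) = (p-j)+1 from by omega, Nat.choose_succ_succ]
          · have hj1 : j = p+1 := by omega
            subst hj1
            norm_num
        rw [hch]
        push_cast
        ring
      have hF2top : F2 (p+1) = 0 := by
        rw [hF2def]
        simp only []
        rw [show p - (p+1) = 0 from by omega, Nat.choose_eq_zero_of_lt (by omega)]
        push_cast
        rw [mul_zero, zero_smul]
      have hF1top : F1 (p+2) = 0 := by
        rw [hF1def]
        simp only []
        rw [show p+1 - (p+2) = 0 from by omega, Nat.choose_eq_zero_of_lt (by omega)]
        push_cast
        rw [mul_zero, zero_smul]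
      have hF0 : F 0 = F1 0 := by
        rw [hFdef, hF1def]
        simp only []
        norm_num
      calc ∑ k ∈ Finset.range (p+3), F k
          = (∑ j ∈ Finset.range (p+2), F (j+1)) + F 0 := Finset.sum_range_succ' F (p+2)
        _ = (∑ j ∈ Finset.range (p+2), (F1 (j+1) - F2 j)) + F1 0 := by
            rw [Finset.sum_congr rfl hsplit, hF0]
        _ = ((∑ j ∈ Finset.range (p+2), F1 (j+1)) + F1 0)
            - ∑ j ∈ Finset.range (p+2), F2 j := by
            rw [Finset.sum_sub_distrib]; ring
        _ = (∑ k ∈ Finset.range (p+3), F1 k) - ∑ j ∈ Finset.range (p+2), F2 j := by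
            rw [Finset.sum_range_succ' F1 (p+2)]
        _ = (∑ k ∈ Finset.range (p+2), F1 k) - ∑ j ∈ Finset.range (p+1), F2 j := by
            rw [Finset.sum_range_succ F1 (p+2), Finset.sum_range_succ F2 (p+1), hF2top, hF1top]
            ring
  exact fun p => (key p).1

lemma delta0 (p s : ℕ) (hs : 1 ≤ s) :
    PowerSeries.coeff (R := ℚ) (3 * s) (Gsum p (s : ℤ)) = ((s + p + 1).choose (3 * s + 1) : ℚ) := by
  rw [claimA p (s : ℤ), ipow_natCast]
  have hB := claimB (s+1) (by omega) (p+1)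
  rw [Nat.add_sub_cancel] at hB
  rw [← hB]
  rw [show slc (p+1) (Sn (s+1)) = PowerSeries.mk
      (fun m => PowerSeries.coeff (R := ℚ) (p+1) (PowerSeries.coeff (R := R17) m (Sn (s+1)))) from rfl,
    coeff_mk, H0 s hs, coeff_final]
  congr 2
  omega

lemma delta1 (p s : ℕ) (hs : 1 ≤ s) :
    PowerSeries.coeff (R := ℚ) (3 * s) (-(Gsum p ((s : ℤ) - 1))) = -(((s + p + 1).choose (3 * s + 1) : ℚ)) := by
  rw [map_neg, claimA p ((s:ℤ) - 1)]
  rw [show ((s:ℤ) - 1) = (((s - 1 : ℕ)):ℤ) from by omega, ipow_natCast]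
  have hB := claimB s hs (p+1)
  rw [← hB]
  rw [show slc (p+1) (Sn s) = PowerSeries.mk
      (fun m => PowerSeries.coeff (R := ℚ) (p+1) (PowerSeries.coeff (R := R17) m (Sn s))) from rfl,
    coeff_mk, H1 s, coeff_final]
  congr 3
  omega

end Aux17

theorem stmt_17 (p s : ℕ) (hp : 1 ≤ p) (hs : 1 ≤ s) (δ : ℕ) (hδ : δ ≤ 1) :
    PowerSeries.coeff (R := ℚ) (3 * s)
      (∑ k ∈ Finset.range (p - δ + 1),
        (((-1) ^ k * ichoose (p - k - δ) ((k : ℤ) - (δ : ℤ)) : ℤ) : ℚ) •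
          (ipow (2 - PowerSeries.X) ((p : ℤ) - 2 * k) *
            ipow (1 + PowerSeries.X) ((s : ℤ) - k)))
      = (-1) ^ δ * (Nat.choose (s + p + 1 - 2 * δ) (3 * s + 1) : ℚ) := by
  interval_cases δ
  · -- δ = 0
    have hsum : (∑ k ∈ Finset.range (p - 0 + 1),
        (((-1) ^ k * ichoose (p - k - 0) ((k : ℤ) - ((0:ℕ) : ℤ)) : ℤ) : ℚ) •
          (ipow (2 - PowerSeries.X) ((p : ℤ) - 2 * k) *
            ipow (1 + PowerSeries.X) ((s : ℤ) - k)))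
        = Gsum p (s : ℤ) := by
      simp only [Nat.sub_zero]
      unfold Gsum
      refine Finset.sum_congr rfl fun k hk => ?_
      congr 1
      rw [ichoose, if_neg (by push_cast; omega)]
      rw [show ((k:ℤ) - ((0:ℕ):ℤ)).toNat = k from by push_cast; omega]
      push_cast
      ring
    rw [hsum, delta0 p s hs]
    norm_num
  · -- δ = 1
    rcases Nat.exists_eq_add_of_le hp with ⟨q, hq⟩
    rcases Nat.eq_zero_or_pos q with hq0 | hq2
    · -- p = 1
      subst hq0
      norm_num at hq ⊢
      subst hq
      rw [Finset.sum_range_one]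
      rw [show ichoose (1 - 0 - 1) ((0:ℕ) - (1:ℤ)) = 0 from by rw [ichoose, if_pos]; norm_num]
      norm_num
      exact (Nat.choose_eq_zero_of_lt (n := s+1+1-2) (k := 3*s+1) (by omega))
    · -- p = q + 1, q ≥ 1: p ≥ 2
      rcases Nat.exists_eq_add_of_le hq2 with ⟨m, hm⟩
      have hp2 : p = m + 2 := by omega
      subst hp2
      have hsum : (∑ k ∈ Finset.range (m + 2 - 1 + 1),
          (((-1) ^ k * ichoose (m + 2 - k - 1) ((k : ℤ) - ((1:ℕ) : ℤ)) : ℤ) : ℚ) •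
            (ipow (2 - PowerSeries.X) (((m+2 : ℕ) : ℤ) - 2 * k) *
              ipow (1 + PowerSeries.X) ((s : ℤ) - k)))
          = -(Gsum m ((s : ℤ) - 1)) := by
        rw [show m + 2 - 1 + 1 = (m + 1) + 1 from by omega, Finset.sum_range_succ']
        have hzero : (((-1) ^ 0 * ichoose (m + 2 - 0 - 1) (((0:ℕ) : ℤ) - ((1:ℕ) : ℤ)) : ℤ) : ℚ) •
            (ipow (2 - PowerSeries.X) (((m+2 : ℕ) : ℤ) - 2 * (0:ℕ)) *
              ipow (1 + PowerSeries.X) ((s : ℤ) - (0:ℕ))) = 0 := by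
          rw [show ichoose (m + 2 - 0 - 1) (((0:ℕ) : ℤ) - ((1:ℕ) : ℤ)) = 0 from by
            rw [ichoose, if_pos]; norm_num]
          norm_num
        rw [hzero, add_zero, Gsum, ← Finset.sum_neg_distrib]
        refine Finset.sum_congr rfl fun j hj => ?_
        have hvec : ipow (2 - X) (((m+2 : ℕ) : ℤ) - 2 * ((j+1 : ℕ) : ℤ)) *
              ipow (1 + X) ((s : ℤ) - ((j+1 : ℕ) : ℤ))
            = ipow (2 - X) ((m : ℤ) - 2 * (j : ℤ)) * ipow (1 + X) (((s:ℤ) - 1) - (j : ℤ)) := by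
          congr 2
          · push_cast; ring
          · push_cast; ring
        rw [hvec, ← neg_smul]
        congr 1
        rw [show m + 2 - (j+1) - 1 = m - j from by omega]
        rw [ichoose, if_neg (by push_cast; omega)]
        rw [show ((((j+1:ℕ)):ℤ) - ((1:ℕ):ℤ)).toNat = j from by push_cast; omega]
        push_cast
        ring
      rw [hsum, delta1 m s hs]
      rw [show s + (m+2) + 1 - 2*1 = s + m + 1 from by omega]
      push_cast
      ring
end

section
/- Let p, s be positive integers and δ ∈ {0,1}. Define T̃(p,s,δ) as the coefficient of x^{3s} in ∑_{k=0}^{p-δ} (-1)^k binom(p-k-δ, k-δ) (2-x)^{p-2k} (1+x)^{p+s-k}. Then T̃(p,s,δ) = (-1)^{s+δ} binom(2s+p-2δ+1, 3s+1). -/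
open PowerSeries Finset
noncomputable section
namespace St18

noncomputable def PP : ℕ → PowerSeries ℚ
  | 0 => 1
  | 1 => -X
  | (n+2) => -X * (PP (n+1) + PP n)

noncomputable def Iu (d : ℕ) : PowerSeries ℚ := ((invOneSubPow ℚ d : (PowerSeries ℚ)ˣ) : PowerSeries ℚ)

lemma IuMul (d : ℕ) : ((1 - X)^d : PowerSeries ℚ) * Iu d = 1 := by
  have h := (invOneSubPow ℚ d).inv_val
  rw [invOneSubPow_inv_eq_one_sub_pow] at h; exact h

lemma oneSubX_ne : (1 - X : PowerSeries ℚ) ≠ 0 := by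
  intro h; have := congrArg (constantCoeff (R := ℚ)) h; simp at this

lemma oneSubX_pow_ne (d : ℕ) : ((1 - X : PowerSeries ℚ)^d) ≠ 0 := pow_ne_zero _ oneSubX_ne

lemma IuStep (d : ℕ) : (1 - X : PowerSeries ℚ) * Iu (d+1) = Iu d := by
  apply mul_left_cancel₀ (oneSubX_pow_ne d)
  calc (1-X:PowerSeries ℚ)^d * ((1-X) * Iu (d+1)) = (1-X)^(d+1) * Iu (d+1) := by ring
  _ = 1 := IuMul _
  _ = (1-X)^d * Iu d := (IuMul d).symm

noncomputable def EE (m : ℕ) : PowerSeries ℚ := (-1)^m * PP m * Iu (m+2)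

lemma Zid0 : ((1 - X)^2 : PowerSeries ℚ) * EE 0 = 1 := by
  rw [EE]; simp [PP]; rw [IuMul 2]

lemma Zid1 : ((1 - X)^2 : PowerSeries ℚ) * EE 1 = X * (1-X) * EE 0 := by
  rw [EE, EE]; simp [PP]
  have h3 : ((1:PowerSeries ℚ) - X)^2 * Iu 3 = (1-X) * Iu 2 := by
    rw [pow_two, mul_assoc, IuStep 2]
  have h2 : (X : PowerSeries ℚ) * (1-X) * Iu 2 = X * ((1-X) * Iu 2) := by ring
  calc ((1:PowerSeries ℚ) - X)^2 * (X * Iu 3) = X * ((1-X)^2 * Iu 3) := by ring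
  _ = X * ((1-X) * Iu 2) := by rw [h3]
  _ = X * (1-X) * Iu 2 := by ring

lemma Zid (m : ℕ) : ((1 - X)^2 : PowerSeries ℚ) * EE (m+2) = X * (1-X) * EE (m+1) - X * EE m := by
  have e2 : EE (m+2) = (-1)^m * (-X * (PP (m+1) + PP m)) * Iu (m+4) := by
    rw [EE, PP]; ring_nf
  have e1 : EE (m+1) = (-1)^(m+1) * PP (m+1) * Iu (m+3) := rfl
  have e0 : EE m = (-1)^m * PP m * Iu (m+2) := rfl
  have h4 : ((1:PowerSeries ℚ) - X)^2 * Iu (m+4) = Iu (m+2) := by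
    rw [pow_two, mul_assoc]
    rw [show m+4 = (m+3)+1 from rfl, IuStep (m+3), IuStep (m+2)]
  have h3 : ((1:PowerSeries ℚ) - X) * Iu (m+3) = Iu (m+2) := IuStep (m+2)
  rw [e2, e1, e0]
  calc ((1:PowerSeries ℚ)-X)^2 * ((-1)^m * (-X * (PP (m+1) + PP m)) * Iu (m+4))
      = (-1)^m * (-X * (PP (m+1) + PP m)) * ((1-X)^2 * Iu (m+4)) := by ring
  _ = (-1)^m * (-X * (PP (m+1) + PP m)) * Iu (m+2) := by rw [h4]
  _ = X * ((-1)^(m+1) * PP (m+1)) * ((1-X) * Iu (m+3)) - X * ((-1)^m * PP m * Iu (m+2)) := by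
      rw [h3]; ring
  _ = X * (1-X) * ((-1)^(m+1) * PP (m+1) * Iu (m+3)) - X * ((-1)^m * PP m * Iu (m+2)) := by ring


noncomputable def WW : ℕ → PowerSeries ℚ
  | 0 => 1
  | 1 => 2 + X - X^2
  | (q+2) => (2 + X - X^2) * WW (q+1) - (1+X) * WW q

lemma coeff_Iu (d n : ℕ) : PowerSeries.coeff (R := ℚ) n (Iu (d+1)) = (Nat.choose (d + n) d : ℚ) := by
  rw [Iu, invOneSubPow_val_succ_eq_mk_add_choose, coeff_mk]

lemma zrec0 (q : ℕ) : coeff (R := ℚ) (q+2) (EE 0) = 2 * coeff (R := ℚ) (q+1) (EE 0) - coeff (R := ℚ) q (EE 0) := by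
  have h' : EE 0 = (X * EE 0 + X * EE 0 + 1) - X * (X * EE 0) := by linear_combination Zid0
  have h2 := congrArg (coeff (R := ℚ) (q+2)) h'
  simp only [map_sub, map_add, coeff_succ_X_mul] at h2
  rw [coeff_one] at h2
  rw [h2]; simp; ring

lemma zrec1 (q : ℕ) : coeff (R := ℚ) (q+2) (EE 1)
    = 2 * coeff (R := ℚ) (q+1) (EE 1) - coeff (R := ℚ) q (EE 1) + coeff (R := ℚ) (q+1) (EE 0) - coeff (R := ℚ) q (EE 0) := by
  have h' : EE 1 = (X * EE 1 + X * EE 1 + X * EE 0) - X * (X * EE 1) - X * (X * EE 0) := by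
    linear_combination Zid1
  have h2 := congrArg (coeff (R := ℚ) (q+2)) h'
  simp only [map_sub, map_add, coeff_succ_X_mul] at h2
  rw [h2]; ring

lemma zrec (q m : ℕ) : coeff (R := ℚ) (q+2) (EE (m+2))
    = 2 * coeff (R := ℚ) (q+1) (EE (m+2)) - coeff (R := ℚ) q (EE (m+2))
      + coeff (R := ℚ) (q+1) (EE (m+1)) - coeff (R := ℚ) q (EE (m+1)) - coeff (R := ℚ) (q+1) (EE m) := by
  have h' : EE (m+2) = (X * EE (m+2) + X * EE (m+2) + X * EE (m+1))
      - X * (X * EE (m+2)) - X * (X * EE (m+1)) - X * EE m := by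
    linear_combination Zid m
  have h2 := congrArg (coeff (R := ℚ) (q+2)) h'
  simp only [map_sub, map_add, coeff_succ_X_mul] at h2
  rw [h2]; ring

lemma two_eq : (2 : PowerSeries ℚ) = C (R := ℚ) 2 := (map_ofNat (C (R := ℚ)) 2).symm

lemma PP_X_dvd (k : ℕ) : X ∣ PP (k+1) := by
  match k with
  | 0 => exact ⟨-1, by rw [PP]; ring⟩
  | (k+1) => exact ⟨-(PP (k+1) + PP k), by rw [PP]; ring⟩

lemma PP_X2_dvd (k : ℕ) : X^2 ∣ PP (k+3) := by
  obtain ⟨g1, h1⟩ := PP_X_dvd (k+1)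
  obtain ⟨g2, h2⟩ := PP_X_dvd k
  exact ⟨-(g1+g2), by rw [PP, h1, h2]; ring⟩

lemma EE0 : EE 0 = Iu 2 := by rw [EE, PP]; ring
lemma EE1 : EE 1 = X * Iu 3 := by rw [EE, PP]; ring
lemma EE2 : EE 2 = -(X * ((1-X) * Iu 4)) := by
  rw [EE]; rw [show PP 2 = -X * (PP 1 + PP 0) from rfl, PP, PP]; ring

lemma cXX0 (f : PowerSeries ℚ) : coeff (R := ℚ) 0 (X*(X*f)) = 0 := by
  rw [coeff_zero_X_mul]
lemma cXXa (f : PowerSeries ℚ) : coeff (R := ℚ) 1 (X*(X*f)) = 0 := by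
  rw [coeff_succ_X_mul, coeff_zero_X_mul]
lemma cXX (n : ℕ) (f : PowerSeries ℚ) : coeff (R := ℚ) (n+2) (X*(X*f)) = coeff (R := ℚ) n f := by
  rw [coeff_succ_X_mul, coeff_succ_X_mul]

lemma base0 : ∀ m, coeff (R := ℚ) m (WW 0) = coeff (R := ℚ) 0 (EE m) := by
  intro m
  rw [WW]
  match m with
  | 0 => rw [EE0, coeff_Iu]; simp
  | (k+1) =>
    rw [coeff_one]
    simp only [Nat.succ_ne_zero, if_false]
    obtain ⟨g, hg⟩ := PP_X_dvd k
    rw [EE, hg, coeff_zero_eq_constantCoeff]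
    simp

lemma base1 : ∀ m, coeff (R := ℚ) m (WW 1) = coeff (R := ℚ) 1 (EE m) := by
  intro m
  rw [WW]
  match m with
  | 0 => rw [EE0, coeff_Iu, two_eq]; simp
  | 1 =>
    rw [EE1, coeff_succ_X_mul, coeff_Iu, two_eq]
    simp [coeff_X_pow, coeff_X, coeff_C]
  | 2 =>
    rw [EE2, IuStep 3, map_neg, coeff_succ_X_mul, coeff_Iu, two_eq]
    simp [coeff_X_pow, coeff_X, coeff_C]
  | (k+3) =>
    obtain ⟨g, hg⟩ := PP_X2_dvd k
    have : EE (k+3) = X * (X * ((-1)^(k+3) * g * Iu (k+3+2))) := by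
      rw [EE, hg]; ring
    rw [this, coeff_succ_X_mul, coeff_zero_X_mul, two_eq]
    simp [coeff_X_pow, coeff_X, coeff_C]

lemma main2 : ∀ q m, coeff (R := ℚ) m (WW q) = coeff (R := ℚ) q (EE m) := by
  intro q
  induction q using Nat.strong_induction_on with
  | _ q ih =>
    match q with
    | 0 => exact base0
    | 1 => exact base1
    | (q+2) =>
      intro m
      have ih1 := ih (q+1) (by omega)
      have ih0 := ih q (by omega)
      have hW : WW (q+2) = (WW (q+1) + WW (q+1) + X * WW (q+1))
          - X * (X * WW (q+1)) - WW q - X * WW q := by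
        rw [WW]; ring
      rw [hW]
      simp only [map_sub, map_add]
      match m with
      | 0 =>
        rw [cXX0, coeff_zero_X_mul, coeff_zero_X_mul, zrec0, ih1 0, ih0 0]
        ring
      | 1 =>
        rw [cXXa, coeff_succ_X_mul, coeff_succ_X_mul, zrec1,
          ih1 1, ih1 0, ih0 1, ih0 0]
        ring
      | (k+2) =>
        rw [cXX, coeff_succ_X_mul, coeff_succ_X_mul, zrec,
          ih1 (k+2), ih1 (k+1), ih1 k, ih0 (k+2), ih0 (k+1)]
        ring

noncomputable def RR (r n : ℕ) : PowerSeries ℚ :=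
  ∑ i ∈ range (n+1), C (R := ℚ) ((-1)^i * (r.choose i)) * ((1-X)^i * PP (n - i))

lemma RRpascal (r n : ℕ) : RR (r+1) (n+1) = RR r (n+1) - (1-X) * RR r n := by
  have key : ∀ i : ℕ,
      C (R := ℚ) ((-1)^(i+1) * (((r+1).choose (i+1) : ℕ) : ℚ)) * ((1-X)^(i+1) * PP (n+1 - (i+1)))
      = C (R := ℚ) ((-1)^(i+1) * ((r.choose (i+1) : ℕ) : ℚ)) * ((1-X)^(i+1) * PP (n+1 - (i+1)))
        + -((1-X) * (C (R := ℚ) ((-1)^i * ((r.choose i : ℕ) : ℚ)) * ((1-X)^i * PP (n - i)))) := by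
    intro i
    have hp : (((r+1).choose (i+1) : ℕ) : ℚ) = (r.choose i : ℚ) + (r.choose (i+1) : ℚ) := by
      exact_mod_cast Nat.choose_succ_succ r i
    have hn : n + 1 - (i+1) = n - i := by omega
    rw [hn, hp]
    simp only [map_mul, map_add, map_pow, map_neg, map_one, map_natCast]
    ring
  calc RR (r+1) (n+1)
      = ∑ i ∈ range (n+1),
          C (R := ℚ) ((-1)^(i+1) * (((r+1).choose (i+1) : ℕ) : ℚ)) * ((1-X)^(i+1) * PP (n+1 - (i+1)))
        + C (R := ℚ) ((-1)^0 * (((r+1).choose 0 : ℕ) : ℚ)) * ((1-X)^0 * PP (n+1 - 0)) := by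
        rw [RR]
        exact Finset.sum_range_succ'
          (fun i => C (R := ℚ) ((-1)^i * (((r+1).choose i : ℕ) : ℚ)) * ((1-X)^i * PP (n+1 - i))) (n+1)
    _ = (∑ i ∈ range (n+1),
          C (R := ℚ) ((-1)^(i+1) * ((r.choose (i+1) : ℕ) : ℚ)) * ((1-X)^(i+1) * PP (n+1 - (i+1)))
        + C (R := ℚ) ((-1)^0 * ((r.choose 0 : ℕ) : ℚ)) * ((1-X)^0 * PP (n+1 - 0)))
        + ∑ i ∈ range (n+1),
            -((1-X) * (C (R := ℚ) ((-1)^i * ((r.choose i : ℕ) : ℚ)) * ((1-X)^i * PP (n - i)))) := by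
        rw [Finset.sum_congr rfl (fun i _ => key i), Finset.sum_add_distrib]
        simp only [Nat.choose_zero_right]
        ring
    _ = RR r (n+1)
        + ∑ i ∈ range (n+1),
            -((1-X) * (C (R := ℚ) ((-1)^i * ((r.choose i : ℕ) : ℚ)) * ((1-X)^i * PP (n - i)))) := by
        rw [RR, Finset.sum_range_succ'
          (fun i => C (R := ℚ) ((-1)^i * ((r.choose i : ℕ) : ℚ)) * ((1-X)^i * PP (n+1 - i))) (n+1)]
    _ = RR r (n+1) - (1-X) * RR r n := by
        simp only [RR]
        rw [Finset.mul_sum, Finset.sum_neg_distrib]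
        ring


lemma RRrec (r n : ℕ) (h : r ≤ n) : RR r (n+2) = -X * (RR r (n+1) + RR r n) := by
  have e2 : RR r (n+2) = ∑ i ∈ range (n+1),
      C (R := ℚ) ((-1)^i * ((r.choose i : ℕ) : ℚ)) * ((1-X)^i * PP (n+2 - i)) := by
    rw [RR, Finset.sum_range_succ, Finset.sum_range_succ]
    have h1 : r.choose (n+1) = 0 := Nat.choose_eq_zero_of_lt (by omega)
    have h2 : r.choose (n+2) = 0 := Nat.choose_eq_zero_of_lt (by omega)
    simp [h1, h2]
  have e1 : RR r (n+1) = ∑ i ∈ range (n+1),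
      C (R := ℚ) ((-1)^i * ((r.choose i : ℕ) : ℚ)) * ((1-X)^i * PP (n+1 - i)) := by
    rw [RR, Finset.sum_range_succ]
    have h1 : r.choose (n+1) = 0 := Nat.choose_eq_zero_of_lt (by omega)
    simp [h1]
  rw [e2, e1, RR, ← Finset.sum_add_distrib, Finset.mul_sum]
  apply Finset.sum_congr rfl
  intro i hi
  have hi' : i ≤ n := by simpa using Nat.lt_succ_iff.mp (Finset.mem_range.mp hi)
  have h2 : n + 2 - i = (n - i) + 2 := by omega
  have h1 : n + 1 - i = (n - i) + 1 := by omega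
  rw [h2, h1, PP]
  ring


lemma psi : ∀ s : ℕ, RR s (3*s) = X^s ∧ RR s (3*s+1) = -X^(s+1) := by
  intro s
  induction s with
  | zero =>
    constructor
    · rw [show 3*0 = 0 from rfl, RR]
      simp [PP]
    · rw [show 3*0+1 = 1 from rfl, RR, Finset.sum_range_succ]
      simp [PP]
  | succ s ih =>
    obtain ⟨h1, h2⟩ := ih
    have a2 : RR s (3*s+2) = X^(s+2) - X^(s+1) := by
      rw [RRrec s (3*s) (by omega), h1, h2]; ring
    have a3 : RR s (3*s+3) = -X^(s+3) + 2*X^(s+2) := by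
      rw [show 3*s+3 = (3*s+1)+2 from rfl, RRrec s (3*s+1) (by omega),
        show (3*s+1)+1 = 3*s+2 from rfl, a2, h2]; ring
    have a4 : RR s (3*s+4) = X^(s+4) - 3*X^(s+3) + X^(s+2) := by
      rw [show 3*s+4 = (3*s+2)+2 from rfl, RRrec s (3*s+2) (by omega),
        show (3*s+2)+1 = 3*s+3 from rfl, a3, a2]; ring
    constructor
    · rw [show 3*(s+1) = (3*s+2)+1 from by ring, RRpascal s (3*s+2),
        show (3*s+2)+1 = 3*s+3 from rfl, a3, a2]; ring
    · rw [show 3*(s+1)+1 = (3*s+3)+1 from by ring, RRpascal s (3*s+3),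
        show (3*s+3)+1 = 3*s+4 from rfl, a4, a3]; ring

lemma RRzero (s : ℕ) : RR (s+1) (3*s+2) = 0 := by
  obtain ⟨h1, h2⟩ := psi s
  have a2 : RR s (3*s+2) = X^(s+2) - X^(s+1) := by
    rw [RRrec s (3*s) (by omega), h1, h2]; ring
  rw [show 3*s+2 = (3*s+1)+1 from rfl, RRpascal s (3*s+1),
    show (3*s+1)+1 = 3*s+2 from rfl, a2, h2]; ring

lemma RRmain (s ε : ℕ) (hs : 1 ≤ s) (hε : ε ≤ 1) : RR (s+ε) (3*s) = X^s := by
  interval_cases ε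
  · exact (psi s).1
  · obtain ⟨t, rfl⟩ : ∃ t, s = t+1 := ⟨s-1, by omega⟩
    rw [show 3*(t+1) = (3*t+2)+1 from by ring, RRpascal (t+1) (3*t+2),
      show (3*t+2)+1 = 3*(t+1) from by ring, (psi (t+1)).1, RRzero t]
    ring

lemma unitEE (m : ℕ) : ((1-X : PowerSeries ℚ))^(m+2) * EE m = (-1)^m * PP m := by
  rw [EE]
  calc ((1-X : PowerSeries ℚ))^(m+2) * ((-1)^m * PP m * Iu (m+2))
      = (-1)^m * PP m * ((1-X)^(m+2) * Iu (m+2)) := by ring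
  _ = (-1)^m * PP m := by rw [IuMul]; ring

lemma MID (s ε : ℕ) (hs : 1 ≤ s) (hε : ε ≤ 1) :
    ∑ i ∈ range (3*s+1), (((s+ε).choose i : ℚ)) • EE (3*s - i)
      = ((-1:ℚ)^s) • (X^s * Iu (3*s+2)) := by
  apply mul_left_cancel₀ (oneSubX_pow_ne (3*s+2))
  rw [Finset.mul_sum]
  have hterm : ∀ i ∈ range (3*s+1),
      (1-X : PowerSeries ℚ)^(3*s+2) * ((((s+ε).choose i : ℚ)) • EE (3*s - i))
      = C (R := ℚ) ((-1)^(3*s)) * (C (R := ℚ) ((-1)^i * (((s+ε).choose i : ℕ) : ℚ)) * ((1-X)^i * PP (3*s - i))) := by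
    intro i hi
    have hi' : i ≤ 3*s := by simpa using Nat.lt_succ_iff.mp (Finset.mem_range.mp hi)
    have hsplit : (1-X : PowerSeries ℚ)^(3*s+2) = (1-X)^i * (1-X)^((3*s-i)+2) := by
      rw [← pow_add]; congr 1; omega
    rw [smul_eq_C_mul, hsplit]
    calc (1-X : PowerSeries ℚ)^i * (1-X)^((3*s-i)+2) * (C (R := ℚ) (((s+ε).choose i : ℚ)) * EE (3*s-i))
        = C (R := ℚ) (((s+ε).choose i : ℚ)) * ((1-X)^i * ((1-X)^((3*s-i)+2) * EE (3*s-i))) := by ring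
    _ = C (R := ℚ) (((s+ε).choose i : ℚ)) * ((1-X)^i * ((-1)^(3*s-i) * PP (3*s-i))) := by rw [unitEE]
    _ = _ := by
        have hpow : ((-1 : PowerSeries ℚ))^(3*s-i) = C (R := ℚ) ((-1 : ℚ)^(3*s-i)) := by
          rw [map_pow, map_neg, map_one]
        have hpar : ((-1:ℚ))^(3*s-i) = (-1)^(3*s) * (-1)^i := by
          have h1 : ((-1:ℚ))^(3*s) = (-1)^(3*s-i) * (-1)^i := by
            rw [← pow_add]; congr 1; omega
          have h2 : ((-1:ℚ))^i * (-1)^i = 1 := by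
            rw [← pow_add]; exact Even.neg_one_pow ⟨i, by ring⟩
          calc ((-1:ℚ))^(3*s-i) = (-1)^(3*s-i) * ((-1)^i * (-1)^i) := by rw [h2]; ring
          _ = (-1)^(3*s) * (-1)^i := by rw [h1]; ring
        rw [hpow, hpar]
        simp only [map_mul]
        ring
  rw [Finset.sum_congr rfl hterm, ← Finset.mul_sum, ← RR, RRmain s ε hs hε]
  rw [smul_eq_C_mul]
  calc C (R := ℚ) ((-1:ℚ)^(3*s)) * X^s = C (R := ℚ) ((-1:ℚ)^s) * X^s := by
        rw [pow_mul]; norm_num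
  _ = (1-X : PowerSeries ℚ)^(3*s+2) * (C (R := ℚ) ((-1:ℚ)^s) * (X^s * Iu (3*s+2))) := by
        have : (1-X : PowerSeries ℚ)^(3*s+2) * (C (R := ℚ) ((-1:ℚ)^s) * (X^s * Iu (3*s+2)))
            = C (R := ℚ) ((-1:ℚ)^s) * X^s * ((1-X)^(3*s+2) * Iu (3*s+2)) := by ring
        rw [this, IuMul]; ring


lemma coeff_one_add_X_pow (n i : ℕ) :
    coeff (R := ℚ) i ((1 + X : PowerSeries ℚ)^n) = (n.choose i : ℚ) := by
  rw [show (1 + X : PowerSeries ℚ) = X + 1 from by ring, add_pow]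
  simp only [one_pow, mul_one, map_sum]
  have : ∀ k ∈ range (n+1), coeff (R := ℚ) i ((X : PowerSeries ℚ)^k * (n.choose k : PowerSeries ℚ))
      = if k = i then (n.choose i : ℚ) else 0 := by
    intro k hk
    have : ((n.choose k : ℕ) : PowerSeries ℚ) = C (R := ℚ) ((n.choose k : ℕ) : ℚ) := by
      rw [map_natCast]
    rw [this, coeff_X_pow_mul', coeff_C]
    by_cases h : k = i
    · subst h; simp
    · by_cases h2 : k ≤ i
      · have : ¬ (i - k = 0) := by omega
        simp [h2, this, h]
      · simp [h2, h]
  rw [Finset.sum_congr rfl this, Finset.sum_ite_eq' (range (n+1)) i fun _ => (n.choose i : ℚ)]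
  by_cases hi : i ∈ range (n+1)
  · simp [hi]
  · have : n.choose i = 0 := Nat.choose_eq_zero_of_lt (by simpa using hi)
    simp [hi, this]

lemma coeff_X_pow_mul_zero (f : PowerSeries ℚ) (s q : ℕ) (h : q < s) :
    coeff (R := ℚ) q ((X : PowerSeries ℚ)^s * f) = 0 := by
  rw [coeff_X_pow_mul']
  simp [Nat.not_le.mpr h]

lemma FinalCoeff (q s ε : ℕ) (hs : 1 ≤ s) (hε : ε ≤ 1) :
    coeff (R := ℚ) (3*s) ((1 + X : PowerSeries ℚ)^(s+ε) * WW q)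
      = (-1)^s * ((2*s+q+1).choose (3*s+1) : ℚ) := by
  rw [coeff_mul, Finset.Nat.sum_antidiagonal_eq_sum_range_succ_mk]
  have step1 : ∀ i ∈ range (3*s+1),
      coeff (R := ℚ) i ((1 + X : PowerSeries ℚ)^(s+ε)) * coeff (R := ℚ) (3*s-i) (WW q)
      = coeff (R := ℚ) q ((((s+ε).choose i : ℚ)) • EE (3*s-i)) := by
    intro i _
    rw [coeff_one_add_X_pow, main2, coeff_smul, smul_eq_mul]
  rw [Finset.sum_congr rfl step1, ← map_sum, MID s ε hs hε, coeff_smul, smul_eq_mul]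
  congr 1
  by_cases h : s ≤ q
  · obtain ⟨d, rfl⟩ : ∃ d, q = d + s := ⟨q - s, by omega⟩
    rw [coeff_X_pow_mul, show 3*s+2 = (3*s+1)+1 from rfl, coeff_Iu]
    congr 2
    omega
  · rw [coeff_X_pow_mul_zero _ _ _ (by omega)]
    rw [Nat.choose_eq_zero_of_lt (by omega)]
    simp

lemma hAunit : IsUnit (2 - X : PowerSeries ℚ) := by
  rw [isUnit_iff_constantCoeff]
  simp only [map_sub, constantCoeff_X, map_ofNat]
  norm_num
lemma hBunit : IsUnit (1 + X : PowerSeries ℚ) := by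
  rw [isUnit_iff_constantCoeff]
  simp only [map_add, constantCoeff_X, map_one]
  norm_num

noncomputable def uA : (PowerSeries ℚ)ˣ := hAunit.unit
noncomputable def uB : (PowerSeries ℚ)ˣ := hBunit.unit

lemma uA_val : (uA : PowerSeries ℚ) = 2 - X := hAunit.unit_spec
lemma uB_val : (uB : PowerSeries ℚ) = 1 + X := hBunit.unit_spec

lemma ipow_eq (f : PowerSeries ℚ) (u : (PowerSeries ℚ)ˣ) (hu : (u : PowerSeries ℚ) = f)
    (n : ℤ) : ipow f n = ((u ^ n : (PowerSeries ℚ)ˣ) : PowerSeries ℚ) := by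
  have hcc : constantCoeff (R := ℚ) f ≠ 0 :=
    (isUnit_iff_constantCoeff.mp ⟨u, hu⟩).ne_zero
  by_cases h : 0 ≤ n
  · rw [ipow, if_pos h]
    obtain ⟨k, rfl⟩ : ∃ k : ℕ, n = (k : ℤ) := ⟨n.toNat, (Int.toNat_of_nonneg h).symm⟩
    rw [zpow_natCast, Units.val_pow_eq_pow_val, hu, Int.toNat_natCast]
  · rw [ipow, if_neg h]
    obtain ⟨k, hk⟩ : ∃ k : ℕ, n = -(k : ℤ) := ⟨(-n).toNat, by omega⟩
    subst hk
    rw [zpow_neg, zpow_natCast]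
    have h1 : (f^k) * ((u^k)⁻¹ : (PowerSeries ℚ)ˣ) = 1 := by
      rw [← hu, ← Units.val_pow_eq_pow_val, Units.mul_inv]
    have h2 : (f^k) * (f^k)⁻¹ = 1 := by
      apply PowerSeries.mul_inv_cancel
      rw [map_pow]
      exact pow_ne_zero _ hcc
    have hfk : (f^k : PowerSeries ℚ) ≠ 0 := by
      intro hz
      rw [hz, zero_mul] at h2
      exact one_ne_zero h2.symm
    have := mul_left_cancel₀ hfk (h2.trans h1.symm)
    rw [neg_neg, Int.toNat_natCast, this]

noncomputable def T (a b : ℤ) : PowerSeries ℚ :=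
  ((uA ^ a * uB ^ b : (PowerSeries ℚ)ˣ) : PowerSeries ℚ)

lemma TmulAB (a b : ℤ) : T (a+1) (b+1) = (2 + X - X^2) * T a b := by
  rw [T, T, zpow_add_one, zpow_add_one]
  simp only [Units.val_mul, uA_val, uB_val]
  ring

lemma TmulB (a b : ℤ) : T a (b+1) = (1 + X) * T a b := by
  rw [T, T, zpow_add_one]
  simp only [Units.val_mul, uB_val]
  ring

lemma TmulBpow (a b : ℤ) (n : ℕ) : T a (b + n) = (1 + X)^n * T a b := by
  induction n with
  | zero => simp
  | succ n ih =>
    have e : b + ((n+1 : ℕ) : ℤ) = (b + n) + 1 := by push_cast; ring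
    rw [e, TmulB, ih]
    ring

noncomputable def SS (q : ℕ) : PowerSeries ℚ :=
  ∑ k ∈ range (q+1), (((-1)^k * ((q-k).choose k) : ℚ)) • T ((q:ℤ) - 2*k) ((q:ℤ) - k)

lemma SS0 : SS 0 = 1 := by
  rw [SS]
  simp [T]

lemma T00 : T 0 0 = 1 := by simp [T]

lemma SS1 : SS 1 = 2 + X - X^2 := by
  rw [SS, Finset.sum_range_succ, Finset.sum_range_succ, Finset.sum_range_zero]
  have h1 : ((1:ℕ)-1).choose 1 = 0 := rfl
  have h2 : (((1:ℕ)):ℤ) - 2*(0:ℕ) = 0 + 1 := by norm_num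
  have h3 : (((1:ℕ)):ℤ) - (0:ℕ) = 0 + 1 := by norm_num
  rw [h1, h2, h3, TmulAB, T00]
  norm_num

lemma Wclosed : ∀ q, SS q = WW q := by
  intro q
  induction q using Nat.strong_induction_on with
  | _ q ih =>
    match q with
    | 0 => rw [SS0, WW]
    | 1 => rw [SS1, WW]
    | (q+2) =>
      have ih1 := ih (q+1) (by omega)
      have ih0 := ih q (by omega)
      rw [WW, ← ih1, ← ih0]
      -- expand SS (q+2)
      have pas : ∀ k, k ≤ q+1 → (q+1-k).choose (k+1) = (q-k).choose (k+1) + (q-k).choose k := by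
        intro k hk
        by_cases h : k ≤ q
        · have : q+1-k = (q-k)+1 := by omega
          rw [this, Nat.choose_succ_succ]
          ring
        · have hk1 : k = q+1 := by omega
          subst hk1
          simp [Nat.choose_eq_zero_of_lt]
      rw [SS, Finset.sum_range_succ' _ (q+2)]
      have key : ∀ k ∈ range (q+2),
          (((-1:ℚ))^(k+1) * ((q+2-(k+1)).choose (k+1) : ℚ)) •
              T (((q+2:ℕ):ℤ) - 2*((k+1:ℕ):ℤ)) (((q+2:ℕ):ℤ) - ((k+1:ℕ):ℤ))
          = (((-1:ℚ))^(k+1) * ((q+1-(k+1)).choose (k+1) : ℚ)) •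
              T (((q+2:ℕ):ℤ) - 2*((k+1:ℕ):ℤ)) (((q+2:ℕ):ℤ) - ((k+1:ℕ):ℤ))
            + -((1+X) * ((((-1:ℚ))^k * ((q-k).choose k : ℚ)) • T ((q:ℤ) - 2*k) ((q:ℤ) - k))) := by
        intro k hk
        have hk' : k ≤ q+1 := by simpa using Nat.lt_succ_iff.mp (Finset.mem_range.mp hk)
        have e1 : q+2-(k+1) = q+1-k := by omega
        have e1' : q+1-(k+1) = q-k := by omega
        have hpas : ((q+1-k).choose (k+1) : ℚ) = ((q-k).choose (k+1) : ℚ) + ((q-k).choose k : ℚ) := by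
          exact_mod_cast pas k hk'
        have a1 : (((q+2:ℕ):ℤ) - 2*((k+1:ℕ):ℤ)) = (q:ℤ) - 2*k := by push_cast; ring
        have a2 : (((q+2:ℕ):ℤ) - ((k+1:ℕ):ℤ)) = ((q:ℤ) - k) + 1 := by push_cast; ring
        rw [e1, e1', hpas, a1, a2, TmulB]
        simp only [smul_eq_C_mul, map_mul, map_add, map_pow, map_neg, map_one]
        ring
      rw [Finset.sum_congr rfl key, Finset.sum_add_distrib]
      have hg : ∑ k ∈ range (q+2),
          -((1+X) * ((((-1:ℚ))^k * ((q-k).choose k : ℚ)) • T ((q:ℤ) - 2*k) ((q:ℤ) - k)))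
          = -((1+X) * SS q) := by
        rw [Finset.sum_range_succ]
        have hz : ((q-(q+1)).choose (q+1) : ℚ) = 0 := by
          rw [show q-(q+1) = 0 from by omega, Nat.choose_eq_zero_of_lt (by omega)]
          simp
        rw [hz, SS, Finset.mul_sum, ← Finset.sum_neg_distrib]
        simp only [mul_zero, zero_smul, smul_zero, neg_zero, add_zero]
      have hh : (∑ k ∈ range (q+2),
            (((-1:ℚ))^(k+1) * ((q+1-(k+1)).choose (k+1) : ℚ)) •
              T (((q+2:ℕ):ℤ) - 2*((k+1:ℕ):ℤ)) (((q+2:ℕ):ℤ) - ((k+1:ℕ):ℤ)))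
          + (((-1:ℚ))^0 * ((q+2-0).choose 0 : ℚ)) •
              T (((q+2:ℕ):ℤ) - 2*((0:ℕ):ℤ)) (((q+2:ℕ):ℤ) - ((0:ℕ):ℤ))
          = (2+X-X^2) * SS (q+1) := by
        have hf0 : (((-1:ℚ))^0 * ((q+2-0).choose 0 : ℚ)) •
              T (((q+2:ℕ):ℤ) - 2*((0:ℕ):ℤ)) (((q+2:ℕ):ℤ) - ((0:ℕ):ℤ))
            = (((-1:ℚ))^0 * ((q+1-0).choose 0 : ℚ)) •
              T (((q+2:ℕ):ℤ) - 2*((0:ℕ):ℤ)) (((q+2:ℕ):ℤ) - ((0:ℕ):ℤ)) := by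
          norm_num
        rw [hf0, ← Finset.sum_range_succ'
          (fun j => (((-1:ℚ))^j * ((q+1-j).choose j : ℚ)) •
            T (((q+2:ℕ):ℤ) - 2*(j:ℤ)) (((q+2:ℕ):ℤ) - (j:ℤ))) (q+2), Finset.sum_range_succ]
        have hz : ((q+1-(q+2)).choose (q+2) : ℚ) = 0 := by
          rw [show q+1-(q+2) = 0 from by omega, Nat.choose_eq_zero_of_lt (by omega)]
          simp
        rw [hz]
        simp only [mul_zero, zero_smul, add_zero]
        rw [SS, Finset.mul_sum]
        apply Finset.sum_congr rfl
        intro j _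
        have a1 : (((q+2:ℕ):ℤ) - 2*(j:ℤ)) = (((q+1:ℕ):ℤ) - 2*j) + 1 := by push_cast; ring
        have a2 : (((q+2:ℕ):ℤ) - (j:ℤ)) = (((q+1:ℕ):ℤ) - j) + 1 := by push_cast; ring
        rw [a1, a2]
        have a3 : ((((q+1:ℕ):ℤ) - 2*j) + 1) = (((q+1:ℕ):ℤ) - 2*j) + 1 := rfl
        rw [TmulAB, mul_smul_comm]
      rw [hg, add_right_comm, hh]
      ring

lemma Tval (a b : ℤ) : T a b
    = ((uA^a : (PowerSeries ℚ)ˣ) : PowerSeries ℚ) * ((uB^b : (PowerSeries ℚ)ˣ) : PowerSeries ℚ) := by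
  rw [T, Units.val_mul]

lemma ipow_T (a b : ℤ) (n : ℕ) :
    ipow (2 - PowerSeries.X) a * ipow (1 + PowerSeries.X) (b + (n:ℕ)) = (1+X)^n * T a b := by
  rw [ipow_eq _ uA uA_val, ipow_eq _ uB uB_val, ← TmulBpow, Tval]

end St18

open St18 in
theorem stmt_18 (p s : ℕ) (hp : 1 ≤ p) (hs : 1 ≤ s) (δ : ℕ) (hδ : δ ≤ 1) :
    PowerSeries.coeff (R := ℚ) (3 * s)
      (∑ k ∈ Finset.range (p - δ + 1),
        (((-1) ^ k * ichoose (p - k - δ) ((k : ℤ) - (δ : ℤ)) : ℤ) : ℚ) •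
          (ipow (2 - PowerSeries.X) ((p : ℤ) - 2 * k) *
            ipow (1 + PowerSeries.X) ((p : ℤ) + (s : ℤ) - k)))
      = (-1) ^ (s + δ) * (Nat.choose (2 * s + p + 1 - 2 * δ) (3 * s + 1) : ℚ) := by
  interval_cases δ
  · -- δ = 0
    have hsum : ∑ k ∈ Finset.range (p - 0 + 1),
        (((-1) ^ k * ichoose (p - k - 0) ((k : ℤ) - ((0:ℕ) : ℤ)) : ℤ) : ℚ) •
          (ipow (2 - PowerSeries.X) ((p : ℤ) - 2 * k) *
            ipow (1 + PowerSeries.X) ((p : ℤ) + (s : ℤ) - k))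
        = (1+X)^(s+0) * SS p := by
      rw [SS, Finset.mul_sum]
      have hrange : p - 0 + 1 = p + 1 := by omega
      rw [hrange]
      apply Finset.sum_congr rfl
      intro k _
      have hich : ichoose (p - k - 0) ((k : ℤ) - ((0:ℕ) : ℤ)) = ((p-k).choose k : ℤ) := by
        rw [ichoose, if_neg (by omega)]
        simp
      have eB : (p : ℤ) + (s:ℤ) - (k:ℤ) = ((p:ℤ) - k) + ((s:ℕ):ℤ) := by ring
      rw [hich, eB, ipow_T, mul_smul_comm]
      norm_num
    rw [hsum, Wclosed, FinalCoeff p s 0 hs (by omega)]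
    norm_num
  · -- δ = 1
    match p, hp with
    | 1, _ =>
      have h0 : ichoose (1 - 0 - 1) (((0:ℕ) : ℤ) - ((1:ℕ):ℤ)) = 0 := by
        rw [ichoose, if_pos (by omega)]
      rw [show (1:ℕ) - 1 + 1 = 1 from rfl, Finset.sum_range_one, h0]
      have hz : ((((-1:ℤ)) ^ 0 * 0 : ℤ) : ℚ) = 0 := by norm_num
      rw [hz, zero_smul, map_zero]
      rw [Nat.choose_eq_zero_of_lt (by omega)]
      norm_num
    | (p'+2), _ =>
      have hrange : p' + 2 - 1 + 1 = p' + 2 := by omega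
      rw [hrange]
      rw [Finset.sum_range_succ' _ (p'+1)]
      have h0 : ichoose (p' + 2 - 0 - 1) (((0:ℕ) : ℤ) - ((1:ℕ):ℤ)) = 0 := by
        rw [ichoose, if_pos (by omega)]
      rw [h0]
      have hz : ((((-1:ℤ)) ^ 0 * 0 : ℤ) : ℚ) = 0 := by norm_num
      rw [hz, zero_smul, add_zero]
      have hsum : ∑ k ∈ Finset.range (p'+1),
          (((-1) ^ (k+1) * ichoose (p' + 2 - (k+1) - 1) ((((k+1):ℕ) : ℤ) - ((1:ℕ):ℤ)) : ℤ) : ℚ) •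
            (ipow (2 - PowerSeries.X) (((p'+2:ℕ) : ℤ) - 2 * (((k+1):ℕ):ℤ)) *
              ipow (1 + PowerSeries.X) (((p'+2:ℕ) : ℤ) + (s : ℤ) - (((k+1):ℕ):ℤ)))
          = -((1+X)^(s+1) * SS p') := by
        rw [SS, Finset.mul_sum, ← Finset.sum_neg_distrib]
        apply Finset.sum_congr rfl
        intro k _
        have hich : ichoose (p' + 2 - (k+1) - 1) ((((k+1):ℕ) : ℤ) - ((1:ℕ):ℤ))
            = ((p'-k).choose k : ℤ) := by
          rw [ichoose, if_neg (by omega)]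
          have h1 : (((((k+1):ℕ)) : ℤ) - ((1:ℕ):ℤ)).toNat = k := by omega
          rw [h1, show p' + 2 - (k+1) - 1 = p' - k from by omega]
        have eA : (((p'+2:ℕ) : ℤ) - 2 * (((k+1):ℕ):ℤ)) = (p':ℤ) - 2*k := by push_cast; ring
        have eB : (((p'+2:ℕ) : ℤ) + (s : ℤ) - (((k+1):ℕ):ℤ)) = ((p':ℤ) - k) + ((s+1:ℕ):ℤ) := by
          push_cast; ring
        rw [hich, eA, eB, ipow_T]
        simp only [smul_eq_C_mul, map_mul, map_pow, map_neg, map_one, Int.cast_mul,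
          Int.cast_pow, Int.cast_neg, Int.cast_one, Int.cast_natCast, map_natCast]
        ring
      rw [hsum, Wclosed, map_neg, FinalCoeff p' s 1 hs (le_refl 1)]
      have harg : 2*s+(p'+2)+1-2*1 = 2*s+p'+1 := by omega
      rw [harg]
      ring
end
end
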